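/- arXiv:1110.3188 — 3 statements merged into one kernel-verified Lean document; each statement's English description precedes it below -/
import Mathlib

section
/- There exist real numbers λ* and c₀ > 0, c₁ > 0, C > 0 such that for every λ ∈ ℂ with Re λ ≥ λ* and every nonzero integer n one has: |λ − q_n| ≥ c₀·|λ|, |λ − q_n| ≥ c₁·|q_n|, and |n|³ ≤ C·|λ − q_n|. -/
open Complex Filter

noncomputable def Aseq (αi αo R : ℝ) (n : ℤ) : ℝ :=
  (n.sign : ℝ) * ((R ^ (2 * n) + 1) / (R ^ (2 * n) - 1)) * αo + αi

noncomputable def museq (σ γi γo : ℝ) (n : ℤ) : ℝ :=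
  (|n| : ℝ) * (σ - 2 * (γo - γi) - σ * (n : ℝ) ^ 2)

noncomputable def qseq (αi αo βi βo R σ γi γo : ℝ) (n : ℤ) : ℂ :=
  (((Aseq αi αo R n : ℝ) : ℂ) + Complex.I * (n.sign : ℂ) * ((βo - βi : ℝ) : ℂ)) /
    ((Aseq αi αo R n ^ 2 + (βo - βi) ^ 2 : ℝ) : ℂ) * ((museq σ γi γo n : ℝ) : ℂ)

lemma Aseq_bounds (αi αo R : ℝ) (hαo : 0 < αo) (hR : 2 ≤ R) (n : ℤ) (hn : n ≠ 0) :
    αi + αo ≤ Aseq αi αo R n ∧ Aseq αi αo R n ≤ αi + 5/3 * αo := by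
  have hR1 : (1:ℝ) ≤ R := by linarith
  have hR2 : (4:ℝ) ≤ R ^ (2:ℤ) := by
    rw [show ((2:ℤ)) = ((2:ℕ):ℤ) by norm_num, zpow_natCast]; nlinarith
  have hkey : 1 ≤ (n.sign : ℝ) * ((R ^ (2 * n) + 1) / (R ^ (2 * n) - 1)) ∧
      (n.sign : ℝ) * ((R ^ (2 * n) + 1) / (R ^ (2 * n) - 1)) ≤ 5/3 := by
    rcases lt_or_gt_of_ne hn with hneg | hpos
    · have hsign : (n.sign : ℝ) = -1 := by
        rw [Int.sign_eq_neg_one_of_neg hneg]; norm_num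
      set x := R ^ (2 * n) with hx
      have hxpos : 0 < x := zpow_pos (by linarith) _
      have hxle : x ≤ 1/4 := by
        have h1 : R ^ (2 * n) ≤ R ^ (-2 : ℤ) := zpow_le_zpow_right₀ hR1 (by omega)
        have h2 : R ^ (-2 : ℤ) = (R ^ (2:ℤ))⁻¹ := by rw [zpow_neg]
        have : R ^ (-2:ℤ) ≤ 1/4 := by
          rw [h2]; rw [inv_le_comm₀ (by linarith) (by norm_num)]; linarith
        linarith
      have hden : (0:ℝ) < 1 - x := by linarith
      have e : (n.sign:ℝ) * ((x + 1) / (x - 1)) = (x + 1) / (1 - x) := by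
        rw [hsign, neg_one_mul, show (1-x) = -(x-1) by ring, div_neg]
      rw [e]
      constructor
      · rw [le_div_iff₀ hden]; linarith
      · rw [div_le_iff₀ hden]; linarith
    · have hsign : (n.sign : ℝ) = 1 := by
        rw [Int.sign_eq_one_of_pos hpos]; norm_num
      set x := R ^ (2 * n) with hx
      have hxge : 4 ≤ x := by
        have h1 : R ^ (2:ℤ) ≤ R ^ (2 * n) := zpow_le_zpow_right₀ hR1 (by omega)
        linarith
      have hden : (0:ℝ) < x - 1 := by linarith
      rw [hsign, one_mul]
      constructor
      · rw [le_div_iff₀ hden]; linarith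
      · rw [div_le_iff₀ hden]; linarith
  unfold Aseq
  constructor <;> nlinarith [hkey.1, hkey.2]

lemma q_facts (αi αo βi βo R σ γi γo : ℝ) (n : ℤ) (hn : n ≠ 0)
    (hA : 0 < Aseq αi αo R n) :
    (qseq αi αo βi βo R σ γi γo n).re
      = Aseq αi αo R n * museq σ γi γo n / (Aseq αi αo R n ^ 2 + (βo - βi) ^ 2) ∧
    (‖qseq αi αo βi βo R σ γi γo n‖) ^ 2
      = museq σ γi γo n ^ 2 / (Aseq αi αo R n ^ 2 + (βo - βi) ^ 2) := by
  set A := Aseq αi αo R n with hAdef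
  set m := museq σ γi γo n with hmdef
  set B := βo - βi with hBdef
  set s : ℝ := (n.sign : ℝ) with hsdef
  have hs2 : s ^ 2 = 1 := by
    rcases lt_or_gt_of_ne hn with h | h
    · rw [hsdef, Int.sign_eq_neg_one_of_neg h]; norm_num
    · rw [hsdef, Int.sign_eq_one_of_pos h]; norm_num
  set D : ℝ := A ^ 2 + B ^ 2 with hDdef
  have hD : 0 < D := by positivity
  have hD0 : (D : ℂ) ≠ 0 := by
    simpa using Complex.ofReal_ne_zero.mpr (ne_of_gt hD)
  have hq : qseq αi αo βi βo R σ γi γo n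
      = Complex.ofReal (A * m / D) + Complex.ofReal (s * B * m / D) * Complex.I := by
    have hcast : ((n.sign : ℤ) : ℂ) = ((s : ℝ) : ℂ) := by push_cast [hsdef]; norm_num
    simp only [qseq, ← hAdef, ← hmdef, ← hBdef, ← hDdef, hcast]
    push_cast
    field_simp
  constructor
  · rw [hq]; simp
  · rw [hq]
    rw [← Complex.normSq_eq_norm_sq]
    simp [Complex.normSq_apply]
    field_simp
    rw [hDdef]
    linear_combination (B * m) ^ 2 * hs2


lemma est (σ a b Bv c cp Mu M K2 K c₁ c₀ C A m t D : ℝ) (q lam : ℂ)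
    (hσ : 0 < σ) (ha : 0 < a)
    (hcp : 0 ≤ cp) (hccp : c ≤ cp)
    (hMudef : Mu = cp * Real.sqrt (cp / σ)) (hMdef : M = Mu / a) (hM : 0 ≤ M)
    (hK2def : K2 = (b ^ 2 + Bv ^ 2) / a ^ 2) (hK : 0 < K) (hKsq : K ^ 2 = K2)
    (hc1def : c₁ = 1 / (K * (1 + M))) (hc1 : 0 < c₁)
    (hc0def : c₀ = c₁ / (1 + c₁)) (hc0 : 0 < c₀)
    (hC1 : 2 * (b ^ 2 + Bv ^ 2) / (a * σ) ≤ C) (hC2 : Real.sqrt (2 * cp / σ) ^ 3 ≤ C)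
    (hC : 0 < C)
    (hAa : a ≤ A) (hAb : A ≤ b) (hDdef : D = A ^ 2 + Bv ^ 2)
    (ht1 : 1 ≤ t) (hm : m = t * (c - σ * t ^ 2))
    (hre : q.re = A * m / D) (habs2 : ‖q‖ ^ 2 = m ^ 2 / D)
    (hlam : M + 1 ≤ lam.re) :
    c₀ * ‖lam‖ ≤ ‖lam - q‖
      ∧ c₁ * ‖q‖ ≤ ‖lam - q‖
      ∧ t ^ 3 ≤ C * ‖lam - q‖ := by
  have hA : 0 < A := lt_of_lt_of_le ha hAa
  have hb : 0 < b := lt_of_lt_of_le hA hAb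
  have hMu : 0 ≤ Mu := by rw [hMudef]; positivity
  have hD : 0 < D := by rw [hDdef]; positivity
  have ht0 : 0 ≤ t := by linarith only [ht1]
  have hA2b : A ^ 2 ≤ b ^ 2 := pow_le_pow_left₀ hA.le hAb 2
  have ha2A : a ^ 2 ≤ A ^ 2 := pow_le_pow_left₀ ha.le hAa 2
  have hDb : D ≤ b ^ 2 + Bv ^ 2 := by rw [hDdef]; linarith only [hA2b]
  have hDA : A ^ 2 ≤ D := by rw [hDdef]; linarith only [sq_nonneg Bv]
  have hst2 : 0 ≤ σ * t ^ 2 := by positivity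
  -- bound on m from above
  have hmMu : m ≤ Mu := by
    rcases le_or_gt (c - σ * t ^ 2) 0 with h | h
    · have h0 : m ≤ 0 := by rw [hm]; exact mul_nonpos_of_nonneg_of_nonpos ht0 h
      linarith only [h0, hMu]
    · have ht2 : t ^ 2 ≤ cp / σ := by
        rw [le_div_iff₀ hσ]; linarith only [h, hccp]
      have hts : t ≤ Real.sqrt (cp / σ) := by
        have h1 : Real.sqrt (t ^ 2) ≤ Real.sqrt (cp / σ) := Real.sqrt_le_sqrt ht2
        rwa [Real.sqrt_sq ht0] at h1
      rw [hMudef, hm]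
      have h2 : c - σ * t ^ 2 ≤ cp := by linarith only [hccp, hst2]
      calc t * (c - σ * t ^ 2) ≤ Real.sqrt (cp / σ) * cp :=
            mul_le_mul hts h2 h.le (Real.sqrt_nonneg _)
        _ = cp * Real.sqrt (cp / σ) := by ring
  -- q.re ≤ M
  have hreM : q.re ≤ M := by
    rw [hre]
    rcases le_or_gt m 0 with h | h
    · have h0 : A * m / D ≤ 0 :=
        div_nonpos_of_nonpos_of_nonneg (mul_nonpos_of_nonneg_of_nonpos hA.le h) hD.le
      linarith only [h0, hM, hMdef]
    · have h1 : A * m / D ≤ m / A := by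
        rw [div_le_div_iff₀ hD hA]
        linarith only [mul_le_mul_of_nonneg_left hDA h.le]
      have h2 : m / A ≤ Mu / a := div_le_div₀ hMu hmMu ha hAa
      rw [hMdef]; linarith only [h1, h2]
  -- E := lam.re - q.re
  set E : ℝ := lam.re - q.re with hEdef
  have hE1 : 1 ≤ E := by rw [hEdef]; linarith only [hlam, hreM]
  have hE0 : 0 < E := by linarith only [hE1]
  have hl0 : 0 ≤ lam.re := by linarith only [hlam, hM]
  have hEle : E ≤ ‖lam - q‖ := by
    have h0 := Complex.re_le_norm (lam - q)
    rwa [Complex.sub_re, ← hEdef] at h0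
  -- |q| ≤ K * |q.re|
  have hqK : ‖q‖ ≤ K * |q.re| := by
    have hsq : (‖q‖) ^ 2 ≤ (K * |q.re|) ^ 2 := by
      have e : (K * |q.re|) ^ 2 = ((b ^ 2 + Bv ^ 2) * (A * m) ^ 2 / a ^ 2) / D ^ 2 := by
        rw [mul_pow, hKsq, hK2def, _root_.sq_abs, hre]
        field_simp
        try ring
      rw [habs2, e, div_div, div_le_div_iff₀ hD (by positivity)]
      have key : a ^ 2 * D ≤ (b ^ 2 + Bv ^ 2) * A ^ 2 := by
        rw [hDdef]
        have e1 : a ^ 2 * A ^ 2 ≤ b ^ 2 * A ^ 2 :=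
          mul_le_mul_of_nonneg_right (ha2A.trans hA2b) (sq_nonneg A)
        have e2 : a ^ 2 * Bv ^ 2 ≤ A ^ 2 * Bv ^ 2 :=
          mul_le_mul_of_nonneg_right ha2A (sq_nonneg Bv)
        linarith only [e1, e2]
      have step := mul_le_mul_of_nonneg_right key
        (by positivity : (0:ℝ) ≤ m ^ 2 * D)
      linarith only [step]
    have h1 := Real.sqrt_le_sqrt hsq
    rwa [Real.sqrt_sq (norm_nonneg q), Real.sqrt_sq (by positivity)] at h1
  -- |q.re| ≤ (1+M) * E
  have hreE : |q.re| ≤ (1 + M) * E := by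
    rcases le_or_gt q.re 0 with h | h
    · rw [abs_of_nonpos h]
      linarith only [hEdef, hl0, mul_nonneg hM hE0.le]
    · rw [abs_of_pos h]
      have k1 : (0:ℝ) ≤ 1 + M := by linarith only [hM]
      have k2 : (0:ℝ) ≤ E - 1 := by linarith only [hE1]
      linarith only [hreM, mul_nonneg k1 k2]
  -- statement 2
  have hs2 : c₁ * ‖q‖ ≤ ‖lam - q‖ := by
    have h1 : ‖q‖ ≤ K * ((1 + M) * E) :=
      le_trans hqK (mul_le_mul_of_nonneg_left hreE hK.le)
    have hc1inv : c₁ * (K * (1 + M)) = 1 := by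
      rw [hc1def]
      field_simp
    calc c₁ * ‖q‖ ≤ c₁ * (K * ((1 + M) * E)) :=
          mul_le_mul_of_nonneg_left h1 hc1.le
      _ = E := by rw [show c₁ * (K * ((1+M)*E)) = c₁ * (K * (1+M)) * E by ring,
                    hc1inv, one_mul]
      _ ≤ ‖lam - q‖ := hEle
  -- statement 1
  have hs1 : c₀ * ‖lam‖ ≤ ‖lam - q‖ := by
    have htri : ‖lam‖ ≤ ‖lam - q‖ + ‖q‖ := by
      calc ‖lam‖ = ‖(lam - q) + q‖ := by ring_nf
        _ ≤ _ := norm_add_le _ _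
    set Z := ‖lam - q‖ with hZdef
    have h5 : c₀ * (1 + c₁) = c₁ := by
      rw [hc0def]; field_simp
    have h7 : c₁ * ‖lam‖ ≤ c₁ * (Z + ‖q‖) :=
      mul_le_mul_of_nonneg_left htri hc1.le
    have h9 : c₀ * ‖lam‖ * (1 + c₁) ≤ Z * (1 + c₁) := by
      calc c₀ * ‖lam‖ * (1 + c₁) = c₁ * ‖lam‖ := by
            linear_combination ‖lam‖ * h5
        _ ≤ c₁ * (Z + ‖q‖) := h7
        _ = c₁ * Z + c₁ * ‖q‖ := by ring
        _ ≤ c₁ * Z + Z := by linarith only [hs2]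
        _ = Z * (1 + c₁) := by ring
    exact le_of_mul_le_mul_right h9 (by positivity)
  -- statement 3
  have hs3 : t ^ 3 ≤ C * ‖lam - q‖ := by
    have hCE : t ^ 3 ≤ C * E := by
      rcases le_or_gt (2 * cp) (σ * t ^ 2) with h | h
      · have hmneg : σ * t ^ 3 / 2 ≤ -m := by
          rw [hm, div_le_iff₀ (by norm_num : (0:ℝ) < 2)]
          have k1 : 0 ≤ t * (σ * t ^ 2 - 2 * cp) :=
            mul_nonneg ht0 (by linarith only [h])
          have k2 : t * c ≤ t * cp := mul_le_mul_of_nonneg_left hccp ht0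
          linarith only [k1, k2]
        have h1 : (0:ℝ) ≤ -m := by
          have k1 : 0 ≤ t * (σ * t ^ 2 - c) :=
            mul_nonneg ht0 (by linarith only [h, hccp, hcp])
          rw [hm]; linarith only [k1]
        have hnre : a * (σ * t ^ 3 / 2) / (b ^ 2 + Bv ^ 2) ≤ -q.re := by
          rw [hre]
          rw [div_le_iff₀ (by positivity), show -(A * m / D) = A * (-m) / D by ring,
            div_mul_eq_mul_div, le_div_iff₀ hD]
          have s1 : a * (σ * t ^ 3 / 2) ≤ A * (-m) :=
            mul_le_mul hAa hmneg (by positivity) hA.le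
          have s2 : a * (σ * t ^ 3 / 2) * D ≤ A * (-m) * (b ^ 2 + Bv ^ 2) :=
            mul_le_mul s1 hDb hD.le (mul_nonneg hA.le h1)
          linarith only [s2]
        have hnr0 : 0 ≤ -q.re := le_trans (by positivity) hnre
        have hnreE : -q.re ≤ E := by rw [hEdef]; linarith only [hl0]
        have ht3 : t ^ 3 ≤ 2 * (b ^ 2 + Bv ^ 2) / (a * σ) * (-q.re) := by
          have h1' : a * (σ * t ^ 3 / 2) ≤ -q.re * (b ^ 2 + Bv ^ 2) :=
            (div_le_iff₀ (by positivity)).mp hnre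
          rw [div_mul_eq_mul_div, le_div_iff₀ (by positivity : (0:ℝ) < a * σ)]
          linarith only [h1']
        calc t ^ 3 ≤ 2 * (b ^ 2 + Bv ^ 2) / (a * σ) * (-q.re) := ht3
          _ ≤ C * (-q.re) := mul_le_mul_of_nonneg_right hC1 hnr0
          _ ≤ C * E := mul_le_mul_of_nonneg_left hnreE hC.le
      · have ht2 : t ^ 2 ≤ 2 * cp / σ := by rw [le_div_iff₀ hσ]; linarith only [h]
        have hts : t ≤ Real.sqrt (2 * cp / σ) := by
          have h1 : Real.sqrt (t ^ 2) ≤ Real.sqrt (2 * cp / σ) := Real.sqrt_le_sqrt ht2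
          rwa [Real.sqrt_sq ht0] at h1
        have h3 : t ^ 3 ≤ Real.sqrt (2 * cp / σ) ^ 3 := pow_le_pow_left₀ ht0 hts 3
        calc t ^ 3 ≤ C := le_trans h3 hC2
          _ = C * 1 := by ring
          _ ≤ C * E := mul_le_mul_of_nonneg_left hE1 hC.le
    calc t ^ 3 ≤ C * E := hCE
      _ ≤ C * ‖lam - q‖ := mul_le_mul_of_nonneg_left hEle hC.le
  exact ⟨hs1, hs2, hs3⟩

/-- There are `λ* ∈ ℝ` and constants `c₀, c₁, C > 0` such that for all
`λ ∈ ℂ` with `Re λ ≥ λ*` and all nonzero integers `n`: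
`|λ − q_n| ≥ c₀·|λ|`, `|λ − q_n| ≥ c₁·|q_n|`, and `|n|³ ≤ C·|λ − q_n|`. -/
theorem statement13 (αi αo βi βo R σ γi γo : ℝ)
    (hαi : 0 < αi) (hαo : 0 < αo) (hβi : 0 ≤ βi) (hβo : 0 ≤ βo) (hR : 2 ≤ R)
    (hσ : 0 < σ) :
    ∃ (lamStar c₀ c₁ C : ℝ), 0 < c₀ ∧ 0 < c₁ ∧ 0 < C ∧
      ∀ lam : ℂ, lamStar ≤ lam.re → ∀ n : ℤ, n ≠ 0 →
        c₀ * ‖lam‖ ≤ ‖lam - qseq αi αo βi βo R σ γi γo n‖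
        ∧ c₁ * ‖qseq αi αo βi βo R σ γi γo n‖
            ≤ ‖lam - qseq αi αo βi βo R σ γi γo n‖
        ∧ (|n| : ℝ) ^ 3 ≤ C * ‖lam - qseq αi αo βi βo R σ γi γo n‖ := by
  set a : ℝ := αi + αo with hadef
  set b : ℝ := αi + 5/3 * αo with hbdef
  set Bv : ℝ := βo - βi with hBvdef
  set c : ℝ := σ - 2 * (γo - γi) with hcdef
  set cp : ℝ := max c 0 with hcpdef
  have ha : 0 < a := by positivity
  have hcp : 0 ≤ cp := le_max_right _ _
  have hccp : c ≤ cp := le_max_left _ _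
  set Mu : ℝ := cp * Real.sqrt (cp / σ) with hMudef
  have hMu : 0 ≤ Mu := by positivity
  set M : ℝ := Mu / a with hMdef
  have hM : 0 ≤ M := by positivity
  set K2 : ℝ := (b ^ 2 + Bv ^ 2) / a ^ 2 with hK2def
  have hK2 : 0 < K2 := by positivity
  set K : ℝ := Real.sqrt K2 with hKdef
  have hK : 0 < K := Real.sqrt_pos.mpr hK2
  have hKsq : K ^ 2 = K2 := Real.sq_sqrt hK2.le
  set c₁ : ℝ := 1 / (K * (1 + M)) with hc1def
  have hc1 : 0 < c₁ := by positivity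
  set c₀ : ℝ := c₁ / (1 + c₁) with hc0def
  have hc0 : 0 < c₀ := by positivity
  set C : ℝ := max (2 * (b ^ 2 + Bv ^ 2) / (a * σ)) (Real.sqrt (2 * cp / σ) ^ 3)
    with hCdef
  have hC : 0 < C := lt_of_lt_of_le (by positivity) (le_max_left _ _)
  have hC1 : 2 * (b ^ 2 + Bv ^ 2) / (a * σ) ≤ C := le_max_left _ _
  have hC2 : Real.sqrt (2 * cp / σ) ^ 3 ≤ C := le_max_right _ _
  refine ⟨M + 1, c₀, c₁, C, hc0, hc1, hC, ?_⟩
  intro lam hlam n hn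
  obtain ⟨hAa, hAb⟩ := Aseq_bounds αi αo R hαo hR n hn
  have hA0 : 0 < Aseq αi αo R n := lt_of_lt_of_le (by positivity) hAa
  obtain ⟨hre, habs2⟩ := q_facts αi αo βi βo R σ γi γo n hn hA0
  have hm : museq σ γi γo n = (|n| : ℝ) * (c - σ * ((|n| : ℝ)) ^ 2) := by
    unfold museq
    rw [← hcdef]
    rw [(_root_.sq_abs (n:ℝ)).symm]
  have ht1 : (1:ℝ) ≤ (|n| : ℝ) := by
    rw [← Int.cast_abs]; exact_mod_cast Int.one_le_abs hn
  exact est σ a b Bv c cp Mu M K2 K c₁ c₀ C (Aseq αi αo R n) (museq σ γi γo n)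
    (|n| : ℝ) (Aseq αi αo R n ^ 2 + Bv ^ 2) (qseq αi αo βi βo R σ γi γo n) lam
    hσ ha hcp hccp hMudef hMdef hM hK2def hK hKsq hc1def hc1 hc0def hc0 hC1 hC2 hC
    hAa hAb rfl ht1 hm hre habs2 hlam
end

section
/- Setting q_0 := 0, the sequence (q_n) satisfies the difference estimates: sup_{n ∈ ℤ \ {0}} |q_{n+1} − q_n| / n² < ∞, and sup_{n ∈ ℤ \ {0}} | q_n·(q_{n+1} − q_{n+2}) + q_{n+2}·(q_{n+1} − q_n) | / n⁴ < ∞. -/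
open Complex Filter

/-- The extension of the sequence `q` by `q_0 := 0`. -/
noncomputable def qseq0 (αi αo βi βo R σ γi γo : ℝ) (n : ℤ) : ℂ :=
  if n = 0 then 0 else qseq αi αo βi βo R σ γi γo n

/-! ### Auxiliary lemmas -/

lemma st14_zpow_ge4 (R : ℝ) (hR : 2 ≤ R) (n : ℤ) (hn : 1 ≤ n) : (4:ℝ) ≤ R ^ (2*n) := by
  have h1 : (1:ℝ) ≤ R := by linarith
  have h2 : R ^ (2:ℤ) ≤ R ^ (2*n) := zpow_le_zpow_right₀ h1 (by omega)
  have : (4:ℝ) ≤ R ^ (2:ℤ) := by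
    rw [show ((2:ℤ)) = ((2:ℕ):ℤ) by norm_num, zpow_natCast]; nlinarith
  linarith

lemma st14_four_zpow_le (R : ℝ) (hR : 2 ≤ R) (n : ℤ) (hn : 0 ≤ n) :
    (4:ℝ)^n ≤ R ^ (2*n) := by
  obtain ⟨m, rfl⟩ := Int.eq_ofNat_of_zero_le hn
  rw [show 2*((m:ℤ)) = ((2*m : ℕ):ℤ) by push_cast; ring, zpow_natCast, zpow_natCast,
    pow_mul]
  exact pow_le_pow_left₀ (by norm_num) (by nlinarith) m

lemma st14_cube_le_pow (n : ℤ) (hn : 1 ≤ n) : ((n:ℝ))^3 ≤ (4:ℝ)^n := by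
  obtain ⟨m, rfl⟩ := Int.eq_ofNat_of_zero_le (by omega : (0:ℤ) ≤ n)
  rw [zpow_natCast]
  have hm : 1 ≤ m := by exact_mod_cast hn
  induction m with
  | zero => omega
  | succ k ih =>
    rcases Nat.eq_or_lt_of_le hm with h | h
    · norm_num [← h]
    · have hk : 1 ≤ k := by omega
      have := ih (by exact_mod_cast hk) hk
      push_cast
      push_cast at this
      rcases Nat.eq_or_lt_of_le hk with h1 | h1
      · rw [← h1]; norm_num
      · have hk2 : (2:ℝ) ≤ (k:ℝ) := by exact_mod_cast h1
        have a1 : 2*(k:ℝ)^2 ≤ (k:ℝ)^3 := by nlinarith [sq_nonneg (k:ℝ)]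
        have a2 : 4*(k:ℝ) ≤ (k:ℝ)^3 := by nlinarith [sq_nonneg ((k:ℝ)-2)]
        have a3 : (8:ℝ) ≤ (k:ℝ)^3 := by nlinarith [sq_nonneg ((k:ℝ)-2)]
        calc ((k:ℝ)+1)^3 ≤ 4*(k:ℝ)^3 := by nlinarith [a1, a2, a3]
          _ ≤ 4*4^k := by linarith
          _ = 4^(k+1) := by ring

lemma st14_Aseq_bounds (αi αo R : ℝ) (hαo : 0 < αo) (hR : 2 ≤ R) (n : ℤ) (hn : 1 ≤ n) :
    αi + αo ≤ Aseq αi αo R n ∧ Aseq αi αo R n ≤ αi + 2*αo := by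
  have hx := st14_zpow_ge4 R hR n hn
  unfold Aseq
  rw [Int.sign_eq_one_of_pos (by omega)]
  set x := R ^ (2*n)
  have hx1 : 0 < x - 1 := by linarith
  have hc1 : 1 ≤ (x+1)/(x-1) := by rw [le_div_iff₀ hx1]; linarith
  have hc2 : (x+1)/(x-1) ≤ 2 := by rw [div_le_iff₀ hx1]; linarith
  constructor <;> push_cast <;> nlinarith

lemma st14_Aseq_diff (αi αo R : ℝ) (hαo : 0 < αo) (hR : 2 ≤ R) (n : ℤ) (hn : 1 ≤ n) :
    |Aseq αi αo R (n+1) - Aseq αi αo R n| ≤ 4*αo/(4:ℝ)^n := by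
  have hx := st14_zpow_ge4 R hR n hn
  have hx' := st14_zpow_ge4 R hR (n+1) (by omega)
  have h4n := st14_four_zpow_le R hR n (by omega)
  have hmono : R ^ (2*n) ≤ R ^ (2*(n+1)) :=
    zpow_le_zpow_right₀ (by linarith) (by omega)
  unfold Aseq
  rw [Int.sign_eq_one_of_pos (by omega : (0:ℤ) < n+1), Int.sign_eq_one_of_pos (by omega)]
  set x := R ^ (2*n)
  set y := R ^ (2*(n+1))
  have hx1 : 0 < x - 1 := by linarith
  have hy1 : 0 < y - 1 := by linarith
  have hd0 : (y+1)/(y-1) ≤ (x+1)/(x-1) := by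
    rw [div_le_div_iff₀ hy1 hx1]; nlinarith
  have hd1 : (x+1)/(x-1) - (y+1)/(y-1) ≤ 4/x := by
    have h1 : (y+1)/(y-1) ≥ 1 := by rw [ge_iff_le, le_div_iff₀ hy1]; linarith
    have h2 : (x+1)/(x-1) ≤ 1 + 4/x := by
      have hxp : 0 < x := by linarith
      rw [div_le_iff₀ hx1, show (1+4/x)*(x-1) = (x*x + 3*x - 4)/x by field_simp; ring,
        le_div_iff₀ hxp]
      nlinarith
    linarith
  push_cast
  rw [show (1:ℝ) * ((y + 1) / (y - 1)) * αo + αi - ((1:ℝ) * ((x + 1) / (x - 1)) * αo + αi)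
      = -(((x+1)/(x-1) - (y+1)/(y-1)) * αo) by ring, abs_neg,
    _root_.abs_of_nonneg (by nlinarith [sub_nonneg.mpr hd0])]
  have h4 : (0:ℝ) < (4:ℝ)^n := zpow_pos (by norm_num) n
  have key : (x+1)/(x-1) - (y+1)/(y-1) ≤ 4/(4:ℝ)^n :=
    le_trans hd1 (div_le_div_of_nonneg_left (by norm_num) h4 h4n)
  rw [show 4*αo/(4:ℝ)^n = (4/(4:ℝ)^n)*αo by ring]
  exact mul_le_mul_of_nonneg_right key hαo.le

lemma st14_Aseq_neg (αi αo R : ℝ) (hR : 2 ≤ R) (n : ℤ) :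
    Aseq αi αo R (-n) = Aseq αi αo R n := by
  have key : ∀ m : ℤ, 1 ≤ m → Aseq αi αo R (-m) = Aseq αi αo R m := by
    intro m hm
    have hx := st14_zpow_ge4 R hR m hm
    have hx0 : (0:ℝ) < R ^ (2*m) := by linarith
    unfold Aseq
    rw [Int.sign_neg, Int.sign_eq_one_of_pos (by omega)]
    rw [show 2*(-m) = -(2*m) by ring, zpow_neg]
    push_cast
    set x := R ^ (2*m)
    have h1 : x - 1 ≠ 0 := by nlinarith
    have h2 : x⁻¹ - 1 ≠ 0 := by
      intro h
      have : x⁻¹ = 1 := by linarith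
      have : x = 1 := by field_simp at this; linarith
      linarith
    have h3 : x ≠ 0 := by linarith
    have h4 : 1 - x ≠ 0 := by nlinarith
    field_simp
    ring
  rcases lt_trichotomy n 0 with h | h | h
  · have := key (-n) (by omega); rw [neg_neg] at this; exact this.symm
  · simp [h]
  · exact key n (by omega)

lemma st14_key_real (A A' b m : ℝ) (hm : 0 < m) (hA : m ≤ A) (hA' : m ≤ A') (hb : 0 ≤ b) :
    m^2 * (b^2 + A*A' + b*(A+A')) ≤ 3*((A^2+b^2)*(A'^2+b^2)) := by
  have hA0 : 0 < A := lt_of_lt_of_le hm hA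
  have hA'0 : 0 < A' := lt_of_lt_of_le hm hA'
  have u1 : m^2 ≤ A*A' := by nlinarith
  have t1 : m^2*b^2 ≤ (A^2+b^2)*(A'^2+b^2) := by
    nlinarith [sq_nonneg b, sq_nonneg (A*b - A'*b), mul_pos hA0 hA'0, sq_nonneg (A*A'),
      mul_nonneg (mul_nonneg hA0.le hA0.le) (sq_nonneg b)]
  have t2 : m^2*(A*A') ≤ (A^2+b^2)*(A'^2+b^2) := by
    nlinarith [sq_nonneg (A*b), sq_nonneg (A'*b), sq_nonneg b, mul_pos hA0 hA'0]
  have u2 : 2*(A' * b) ≤ A'^2 + b^2 := by nlinarith [sq_nonneg (A' - b)]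
  have u3 : 2*(A * b) ≤ A^2 + b^2 := by nlinarith [sq_nonneg (A - b)]
  have t3 : 2*(m^2*(b * A)) ≤ (A^2+b^2)*(A'^2+b^2) := by
    have c1 : 2*(m^2*(b * A)) ≤ A^2 * (2*(A'*b)) := by nlinarith [mul_nonneg hb hA0.le]
    have c3 : A^2 * (2*(A'*b)) ≤ A^2 * (A'^2+b^2) := mul_le_mul_of_nonneg_left u2 (sq_nonneg A)
    nlinarith [mul_le_mul_of_nonneg_right (by nlinarith [sq_nonneg b] : A^2 ≤ A^2+b^2)
      (by positivity : (0:ℝ) ≤ A'^2+b^2)]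
  have t4 : 2*(m^2*(b * A')) ≤ (A^2+b^2)*(A'^2+b^2) := by
    have c1 : 2*(m^2*(b * A')) ≤ A'^2 * (2*(A*b)) := by nlinarith [mul_nonneg hb hA'0.le]
    have c3 : A'^2 * (2*(A*b)) ≤ A'^2 * (A^2+b^2) := mul_le_mul_of_nonneg_left u3 (sq_nonneg A')
    nlinarith [mul_le_mul_of_nonneg_right (by nlinarith [sq_nonneg b] : A'^2 ≤ A'^2+b^2)
      (by positivity : (0:ℝ) ≤ A^2+b^2)]
  nlinarith [t1, t2, t3, t4]

lemma st14_norm_ofReal (r : ℝ) : ‖(r : ℂ)‖ = |r| := by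
  rw [Complex.norm_real, Real.norm_eq_abs]

lemma st14_fs_abs (A B m : ℝ) (hm : 0 < m) (hA : m ≤ A) :
    norm (((A : ℝ) : ℂ) + Complex.I * ((B : ℝ) : ℂ)) / (A^2 + B^2) ≤ 2/m := by
  have hA0 : 0 < A := lt_of_lt_of_le hm hA
  have hnum : norm (((A : ℝ) : ℂ) + Complex.I * ((B : ℝ) : ℂ)) ≤ A + |B| := by
    calc norm _ ≤ norm ((A:ℝ):ℂ) + norm (Complex.I * ((B:ℝ):ℂ)) :=
          norm_add_le _ _
      _ = |A| + |B| := by simp [norm_mul, st14_norm_ofReal]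
      _ = A + |B| := by rw [_root_.abs_of_pos hA0]
  have hden : 0 < A^2 + B^2 := by positivity
  have key : (A + |B|) / (A^2+B^2) ≤ 2/m := by
    rw [div_le_div_iff₀ hden hm]
    have hb : 0 ≤ |B| := abs_nonneg B
    have hb2 : |B|^2 = B^2 := sq_abs B
    nlinarith [sq_nonneg (A - |B|), mul_le_mul_of_nonneg_right hA hA0.le,
      mul_le_mul_of_nonneg_right hA hb]
  exact le_trans (div_le_div_of_nonneg_right hnum hden.le) key

lemma st14_fs_diff (A A' B m : ℝ) (hm : 0 < m) (hA : m ≤ A) (hA' : m ≤ A') :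
    norm ( (((A':ℝ):ℂ) + Complex.I*((B:ℝ):ℂ))/((A'^2+B^2 : ℝ):ℂ)
      - (((A:ℝ):ℂ) + Complex.I*((B:ℝ):ℂ))/((A^2+B^2 : ℝ):ℂ) )
    ≤ 3/m^2 * |A' - A| := by
  have hA0 : 0 < A := lt_of_lt_of_le hm hA
  have hA'0 : 0 < A' := lt_of_lt_of_le hm hA'
  have hDpos : 0 < A^2+B^2 := by positivity
  have hD'pos : 0 < A'^2+B^2 := by positivity
  have hDne : ((A^2+B^2:ℝ):ℂ) ≠ 0 := Complex.ofReal_ne_zero.mpr hDpos.ne'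
  have hD'ne : ((A'^2+B^2:ℝ):ℂ) ≠ 0 := Complex.ofReal_ne_zero.mpr hD'pos.ne'
  have step1 : (((A':ℝ):ℂ) + Complex.I*((B:ℝ):ℂ))/((A'^2+B^2 : ℝ):ℂ)
      - (((A:ℝ):ℂ) + Complex.I*((B:ℝ):ℂ))/((A^2+B^2 : ℝ):ℂ)
      = (((A'*(A^2+B^2) - A*(A'^2+B^2) : ℝ):ℂ)
          + Complex.I*((B*((A^2+B^2)-(A'^2+B^2)) : ℝ):ℂ))/(((A^2+B^2)*(A'^2+B^2) : ℝ):ℂ) := by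
    have hprod : (((A^2+B^2)*(A'^2+B^2) : ℝ):ℂ) ≠ 0 :=
      Complex.ofReal_ne_zero.mpr (mul_pos hDpos hD'pos).ne'
    rw [div_sub_div _ _ hD'ne hDne, div_eq_div_iff (mul_ne_zero hD'ne hDne) hprod]
    push_cast
    ring
  rw [step1, norm_div, st14_norm_ofReal, _root_.abs_of_pos (mul_pos hDpos hD'pos)]
  have h1 : |B^2 - A*A'| ≤ B^2 + A*A' := by
    rcases abs_cases (B^2 - A*A') with ⟨h,_⟩|⟨h,_⟩ <;> nlinarith [sq_nonneg B, mul_pos hA0 hA'0]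
  have h2 : |A+A'| = A+A' := _root_.abs_of_pos (by linarith)
  have hnum : norm (((A'*(A^2+B^2) - A*(A'^2+B^2) : ℝ):ℂ)
        + Complex.I*((B*((A^2+B^2)-(A'^2+B^2)) : ℝ):ℂ))
      ≤ |A'-A| * (B^2 + A*A' + |B| * (A+A')) := by
    calc norm _ ≤ norm ((A'*(A^2+B^2) - A*(A'^2+B^2) : ℝ):ℂ)
          + norm (Complex.I*((B*((A^2+B^2)-(A'^2+B^2)) : ℝ):ℂ)) := norm_add_le _ _
      _ = |A'*(A^2+B^2) - A*(A'^2+B^2)| + |B*((A^2+B^2)-(A'^2+B^2))| := by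
          simp only [norm_mul, Complex.norm_I, st14_norm_ofReal, one_mul]
      _ ≤ |A'-A| * (B^2 + A*A' + |B| * (A+A')) := by
          rw [show A'*(A^2+B^2) - A*(A'^2+B^2) = (A'-A)*(B^2 - A*A') by ring,
            show B*((A^2+B^2)-(A'^2+B^2)) = (B*(A+A'))*(A - A') by ring,
            abs_mul, abs_mul, abs_mul,
            show |A - A'| = |A'-A| from abs_sub_comm _ _, h2]
          nlinarith [abs_nonneg (A'-A), abs_nonneg B,
            mul_le_mul_of_nonneg_left h1 (abs_nonneg (A'-A))]
  have key := st14_key_real A A' |B| m hm hA hA' (abs_nonneg B)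
  rw [_root_.sq_abs] at key
  have hm2 : 0 < m^2 := by positivity
  have key' : (B^2 + A*A' + |B| * (A+A')) ≤ 3/m^2 * ((A^2+B^2)*(A'^2+B^2)) := by
    rw [div_mul_eq_mul_div, le_div_iff₀ hm2]; linarith
  have hpos := (mul_pos hDpos hD'pos).le
  calc norm _ / ((A^2+B^2)*(A'^2+B^2))
      ≤ (|A'-A| * (B^2 + A*A' + |B| * (A+A')))/((A^2+B^2)*(A'^2+B^2)) :=
        div_le_div_of_nonneg_right hnum hpos
    _ ≤ (|A'-A| * (3/m^2 * ((A^2+B^2)*(A'^2+B^2))))/((A^2+B^2)*(A'^2+B^2)) :=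
        div_le_div_of_nonneg_right (mul_le_mul_of_nonneg_left key' (abs_nonneg _)) hpos
    _ = 3/m^2 * |A'-A| := by field_simp

/-! ### The symbol `F` -/

noncomputable def st14F (αi αo βi βo R : ℝ) (n : ℤ) : ℂ :=
  (((Aseq αi αo R n : ℝ) : ℂ) + Complex.I * (((βo - βi) : ℝ) : ℂ)) /
    ((Aseq αi αo R n ^ 2 + (βo - βi) ^ 2 : ℝ) : ℂ)

lemma st14_qseq_pos (αi αo βi βo R σ γi γo : ℝ) (n : ℤ) (hn : 1 ≤ n) :
    qseq αi αo βi βo R σ γi γo n = st14F αi αo βi βo R n * ((museq σ γi γo n : ℝ) : ℂ) := by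
  unfold qseq st14F
  rw [Int.sign_eq_one_of_pos (by omega)]
  push_cast
  ring

lemma st14_mu_eq (σ γi γo : ℝ) (n : ℤ) (hn : 0 ≤ n) :
    museq σ γi γo n = (n:ℝ) * (σ - 2*(γo-γi) - σ*(n:ℝ)^2) := by
  unfold museq
  rw [_root_.abs_of_nonneg (by exact_mod_cast hn : (0:ℝ) ≤ (n:ℝ))]

lemma st14_mu_neg (σ γi γo : ℝ) (n : ℤ) : museq σ γi γo (-n) = museq σ γi γo n := by
  unfold museq
  push_cast
  rw [abs_neg]
  ring

lemma st14_qseq_zero (αi αo βi βo R σ γi γo : ℝ) : qseq αi αo βi βo R σ γi γo 0 = 0 := by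
  unfold qseq museq
  simp

lemma st14_qseq0_eq (αi αo βi βo R σ γi γo : ℝ) (n : ℤ) :
    qseq0 αi αo βi βo R σ γi γo n = qseq αi αo βi βo R σ γi γo n := by
  unfold qseq0
  split
  · rename_i h; rw [h, st14_qseq_zero]
  · rfl

/-! ### Quantitative bounds -/

lemma st14_mu_abs (σ γi γo : ℝ) (hσ : 0 < σ) (n : ℤ) (hn : 0 ≤ n) :
    |museq σ γi γo n| ≤ (2*σ + 2*|γo-γi|) * ((n:ℝ))^3 := by
  rcases eq_or_lt_of_le hn with h | h
  · rw [← h]; unfold museq; simp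
  · have hn1 : 1 ≤ n := h
    have hx1 : (1:ℝ) ≤ (n:ℝ) := by exact_mod_cast hn1
    have hx0 : (0:ℝ) ≤ (n:ℝ) := by linarith
    have hxx : (n:ℝ) ≤ (n:ℝ)^3 := by nlinarith [sq_nonneg ((n:ℝ)-1), sq_nonneg (n:ℝ)]
    have h1 : |σ - 2*(γo-γi) - σ*(n:ℝ)^2| ≤ σ + 2*|γo-γi| + σ*(n:ℝ)^2 := by
      rcases abs_cases (σ - 2*(γo-γi) - σ*(n:ℝ)^2) with ⟨h2,_⟩|⟨h2,_⟩ <;>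
        nlinarith [le_abs_self (γo-γi), neg_abs_le (γo-γi), sq_nonneg (n:ℝ)]
    rw [st14_mu_eq _ _ _ n hn, abs_mul, _root_.abs_of_nonneg hx0]
    calc (n:ℝ) * |σ - 2*(γo-γi) - σ*(n:ℝ)^2| ≤ (n:ℝ) * (σ + 2*|γo-γi| + σ*(n:ℝ)^2) :=
          mul_le_mul_of_nonneg_left h1 hx0
      _ ≤ (2*σ + 2*|γo-γi|) * ((n:ℝ))^3 := by
          nlinarith [mul_nonneg (abs_nonneg (γo-γi)) (sub_nonneg.mpr hxx),
            mul_nonneg hσ.le (sub_nonneg.mpr hxx), sq_nonneg (n:ℝ)]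

lemma st14_mu_diff (σ γi γo : ℝ) (hσ : 0 < σ) (n : ℤ) (hn : 0 ≤ n) :
    |museq σ γi γo (n+1) - museq σ γi γo n| ≤ (4*σ + 2*|γo-γi|) * ((n:ℝ)+1)^2 := by
  have hx0 : (0:ℝ) ≤ (n:ℝ) := by exact_mod_cast hn
  have e : museq σ γi γo (n+1) - museq σ γi γo n
      = (σ - 2*(γo-γi)) - σ*(3*(n:ℝ)^2+3*(n:ℝ)+1) := by
    rw [st14_mu_eq _ _ _ (n+1) (by omega), st14_mu_eq _ _ _ n hn]
    push_cast
    ring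
  rw [e]
  rcases abs_cases ((σ - 2*(γo-γi)) - σ*(3*(n:ℝ)^2+3*(n:ℝ)+1)) with ⟨h2,_⟩|⟨h2,_⟩ <;>
    nlinarith [le_abs_self (γo-γi), neg_abs_le (γo-γi), sq_nonneg (n:ℝ),
      mul_nonneg (abs_nonneg (γo-γi)) (sq_nonneg (n:ℝ)),
      mul_nonneg (abs_nonneg (γo-γi)) hx0, mul_nonneg hσ.le (sq_nonneg (n:ℝ)),
      mul_nonneg hσ.le hx0]

lemma st14_mu_dd (σ γi γo : ℝ) (hσ : 0 < σ) (n : ℤ) (hn : 0 ≤ n) :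
    |museq σ γi γo (n+2) - 2*museq σ γi γo (n+1) + museq σ γi γo n| ≤ 6*σ*((n:ℝ)+1) := by
  have hx0 : (0:ℝ) ≤ (n:ℝ) := by exact_mod_cast hn
  have e : museq σ γi γo (n+2) - 2*museq σ γi γo (n+1) + museq σ γi γo n
      = -(σ*(6*(n:ℝ)+6)) := by
    rw [st14_mu_eq _ _ _ (n+2) (by omega), st14_mu_eq _ _ _ (n+1) (by omega),
      st14_mu_eq _ _ _ n hn]
    push_cast
    ring
  rw [e, abs_neg, _root_.abs_of_nonneg (by nlinarith)]
  nlinarith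

lemma st14_F_abs (αi αo βi βo R : ℝ) (hαi : 0 < αi) (hαo : 0 < αo) (hR : 2 ≤ R)
    (n : ℤ) (hn : 1 ≤ n) :
    norm (st14F αi αo βi βo R n) ≤ 2/(αi+αo) := by
  obtain ⟨hlb, hub⟩ := st14_Aseq_bounds αi αo R hαo hR n hn
  have hm : 0 < αi+αo := by linarith
  have hA : 0 < Aseq αi αo R n := by linarith
  have hden : 0 < Aseq αi αo R n^2 + (βo-βi)^2 := by positivity
  unfold st14F
  rw [norm_div, st14_norm_ofReal, _root_.abs_of_pos hden]
  exact st14_fs_abs _ _ _ hm hlb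

lemma st14_F_diff (αi αo βi βo R : ℝ) (hαi : 0 < αi) (hαo : 0 < αo) (hR : 2 ≤ R)
    (k l : ℤ) (hk : 1 ≤ k) (hl : 1 ≤ l) :
    norm (st14F αi αo βi βo R l - st14F αi αo βi βo R k)
      ≤ 3/(αi+αo)^2 * |Aseq αi αo R l - Aseq αi αo R k| := by
  have hm : 0 < αi+αo := by linarith
  exact st14_fs_diff (Aseq αi αo R k) (Aseq αi αo R l) (βo-βi) (αi+αo) hm
    (st14_Aseq_bounds αi αo R hαo hR k hk).1 (st14_Aseq_bounds αi αo R hαo hR l hl).1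

lemma st14_q_abs (αi αo βi βo R σ γi γo : ℝ)
    (hαi : 0 < αi) (hαo : 0 < αo) (hR : 2 ≤ R) (hσ : 0 < σ) :
    ∃ Q : ℝ, 0 ≤ Q ∧ ∀ n : ℤ, 0 ≤ n →
      norm (qseq αi αo βi βo R σ γi γo n) ≤ Q * ((n:ℝ))^3 := by
  have hm : 0 < αi+αo := by linarith
  refine ⟨2/(αi+αo) * (2*σ + 2*|γo-γi|), by positivity, ?_⟩
  intro n hn
  rcases eq_or_lt_of_le hn with h | h
  · rw [← h, st14_qseq_zero]
    simp
  · have hn1 : 1 ≤ n := h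
    rw [st14_qseq_pos _ _ _ _ _ _ _ _ n hn1, norm_mul, st14_norm_ofReal, mul_assoc]
    exact mul_le_mul (st14_F_abs αi αo βi βo R hαi hαo hR n hn1)
      (st14_mu_abs σ γi γo hσ n hn) (abs_nonneg _) (by positivity)

lemma st14_q_diff (αi αo βi βo R σ γi γo : ℝ)
    (hαi : 0 < αi) (hαo : 0 < αo) (hR : 2 ≤ R) (hσ : 0 < σ) :
    ∃ D : ℝ, 0 ≤ D ∧ ∀ n : ℤ, 0 ≤ n →
      norm (qseq αi αo βi βo R σ γi γo (n+1) - qseq αi αo βi βo R σ γi γo n)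
        ≤ D * ((n:ℝ)+1)^2 := by
  have hm : 0 < αi+αo := by linarith
  refine ⟨2*(4*σ+2*|γo-γi|)/(αi+αo) + 12*αo*(2*σ+2*|γo-γi|)/(αi+αo)^2, by positivity, ?_⟩
  intro n hn
  rcases eq_or_lt_of_le hn with h | h
  · -- n = 0
    rw [← h]
    norm_num
    rw [st14_qseq_zero, sub_zero]
    have h1 := st14_F_abs αi αo βi βo R hαi hαo hR 1 le_rfl
    have h2 : |museq σ γi γo 1| ≤ 2*|γo-γi| := by
      rw [st14_mu_eq _ _ _ 1 (by norm_num)]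
      push_cast
      rw [show (1:ℝ) * (σ - 2*(γo-γi) - σ*1^2) = -(2*(γo-γi)) by ring, abs_neg, abs_mul]
      norm_num
    rw [st14_qseq_pos _ _ _ _ _ _ _ _ 1 le_rfl, norm_mul, st14_norm_ofReal]
    calc norm (st14F αi αo βi βo R 1) * |museq σ γi γo 1|
        ≤ (2/(αi+αo)) * (2*|γo-γi|) :=
          mul_le_mul h1 h2 (abs_nonneg _) (by positivity)
      _ ≤ 2*(4*σ+2*|γo-γi|)/(αi+αo) + 12*αo*(2*σ+2*|γo-γi|)/(αi+αo)^2 := by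
          have c1 : (0:ℝ) ≤ 12*αo*(2*σ+2*|γo-γi|)/(αi+αo)^2 := by positivity
          have c2 : (2/(αi+αo)) * (2*|γo-γi|) ≤ 2*(4*σ+2*|γo-γi|)/(αi+αo) := by
            rw [div_mul_eq_mul_div, div_le_div_iff₀ hm hm]
            nlinarith [abs_nonneg (γo-γi)]
          linarith
  · -- n ≥ 1
    have hn1 : 1 ≤ n := h
    have hx1 : (1:ℝ) ≤ (n:ℝ) := by exact_mod_cast hn1
    have h4 : (0:ℝ) < (4:ℝ)^n := zpow_pos (by norm_num) n
    have decomp : qseq αi αo βi βo R σ γi γo (n+1) - qseq αi αo βi βo R σ γi γo n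
        = st14F αi αo βi βo R (n+1) * ((museq σ γi γo (n+1) - museq σ γi γo n : ℝ):ℂ)
          + (st14F αi αo βi βo R (n+1) - st14F αi αo βi βo R n) * ((museq σ γi γo n : ℝ):ℂ) := by
      rw [st14_qseq_pos _ _ _ _ _ _ _ _ (n+1) (by omega), st14_qseq_pos _ _ _ _ _ _ _ _ n hn1]
      push_cast
      ring
    have t1 : norm (st14F αi αo βi βo R (n+1)) * |museq σ γi γo (n+1) - museq σ γi γo n|
        ≤ (2/(αi+αo)) * ((4*σ+2*|γo-γi|)*((n:ℝ)+1)^2) :=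
      mul_le_mul (st14_F_abs αi αo βi βo R hαi hαo hR (n+1) (by omega))
        (st14_mu_diff σ γi γo hσ n hn) (abs_nonneg _) (by positivity)
    have t2 : norm (st14F αi αo βi βo R (n+1) - st14F αi αo βi βo R n)
        ≤ 3/(αi+αo)^2 * (4*αo/(4:ℝ)^n) := by
      refine (st14_F_diff αi αo βi βo R hαi hαo hR n (n+1) hn1 (by omega)).trans ?_
      exact mul_le_mul_of_nonneg_left (st14_Aseq_diff αi αo R hαo hR n hn1) (by positivity)
    have t3 : |museq σ γi γo n| ≤ (2*σ+2*|γo-γi|) * (4:ℝ)^n :=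
      (st14_mu_abs σ γi γo hσ n hn).trans
        (mul_le_mul_of_nonneg_left (st14_cube_le_pow n hn1) (by positivity))
    have e : (3/(αi+αo)^2 * (4*αo/(4:ℝ)^n)) * ((2*σ+2*|γo-γi|) * (4:ℝ)^n)
        = 12*αo*(2*σ+2*|γo-γi|)/(αi+αo)^2 := by
      field_simp
      ring
    have h1 : (1:ℝ) ≤ ((n:ℝ)+1)^2 := by nlinarith
    calc norm (qseq αi αo βi βo R σ γi γo (n+1) - qseq αi αo βi βo R σ γi γo n)
        ≤ norm (st14F αi αo βi βo R (n+1)) * |museq σ γi γo (n+1) - museq σ γi γo n|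
          + norm (st14F αi αo βi βo R (n+1) - st14F αi αo βi βo R n)
            * |museq σ γi γo n| := by
          rw [decomp]
          refine (norm_add_le _ _).trans ?_
          rw [norm_mul, norm_mul, st14_norm_ofReal, st14_norm_ofReal]
      _ ≤ (2/(αi+αo)) * ((4*σ+2*|γo-γi|)*((n:ℝ)+1)^2)
          + (3/(αi+αo)^2 * (4*αo/(4:ℝ)^n)) * ((2*σ+2*|γo-γi|) * (4:ℝ)^n) :=
          add_le_add t1 (mul_le_mul t2 t3 (abs_nonneg _) (by positivity))
      _ = (2*(4*σ+2*|γo-γi|)/(αi+αo)) * ((n:ℝ)+1)^2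
          + (12*αo*(2*σ+2*|γo-γi|)/(αi+αo)^2) * 1 := by rw [e]; ring
      _ ≤ (2*(4*σ+2*|γo-γi|)/(αi+αo)) * ((n:ℝ)+1)^2
          + (12*αo*(2*σ+2*|γo-γi|)/(αi+αo)^2) * ((n:ℝ)+1)^2 :=
          add_le_add_right (mul_le_mul_of_nonneg_left h1 (by positivity)) _
      _ = _ := by ring

lemma st14_abs_sub (a b : ℂ) : norm (a - b) ≤ norm a + norm b := by
  have h := norm_add_le a (-b)
  rw [norm_neg] at h
  rw [sub_eq_add_neg]
  exact h

lemma st14_q_dd (αi αo βi βo R σ γi γo : ℝ)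
    (hαi : 0 < αi) (hαo : 0 < αo) (hR : 2 ≤ R) (hσ : 0 < σ) :
    ∃ E : ℝ, 0 ≤ E ∧ ∀ n : ℤ, 0 ≤ n →
      norm (qseq αi αo βi βo R σ γi γo (n+2) - 2*qseq αi αo βi βo R σ γi γo (n+1)
        + qseq αi αo βi βo R σ γi γo n) ≤ E * ((n:ℝ)+1) := by
  have hm : 0 < αi+αo := by linarith
  obtain ⟨Q, hQ0, hQ⟩ := st14_q_abs αi αo βi βo R σ γi γo hαi hαo hR hσ
  refine ⟨12*σ/(αi+αo) + 12*αo*((4*σ+2*|γo-γi|) + 2*(2*σ+2*|γo-γi|))/(αi+αo)^2 + 10*Q,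
    by positivity, ?_⟩
  intro n hn
  rcases eq_or_lt_of_le hn with h | h
  · -- n = 0 : q2 - 2 q1 + q0 = q2 - 2 q1
    rw [← h]
    norm_num
    rw [st14_qseq_zero, add_zero]
    have h2 := hQ 2 (by norm_num)
    have h1 := hQ 1 (by norm_num)
    norm_num at h1 h2
    calc norm (qseq αi αo βi βo R σ γi γo 2 - 2*qseq αi αo βi βo R σ γi γo 1)
        ≤ norm (qseq αi αo βi βo R σ γi γo 2)
          + norm (2*qseq αi αo βi βo R σ γi γo 1) := st14_abs_sub _ _
      _ ≤ Q*8 + 2*Q := by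
          rw [norm_mul]
          have he : norm (2:ℂ) = 2 := by norm_num
          rw [he]
          exact add_le_add h2 (by linarith)
      _ ≤ _ := by
          have c0 : (0:ℝ) ≤ 12*σ/(αi+αo)
              + 12*αo*((4*σ+2*|γo-γi|) + 2*(2*σ+2*|γo-γi|))/(αi+αo)^2 := by positivity
          linarith
  · have hn1 : 1 ≤ n := h
    have hx1 : (1:ℝ) ≤ (n:ℝ) := by exact_mod_cast hn1
    have h4 : (0:ℝ) < (4:ℝ)^n := zpow_pos (by norm_num) n
    have h4' : (0:ℝ) < (4:ℝ)^(n+1) := zpow_pos (by norm_num) (n+1)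
    have decomp : qseq αi αo βi βo R σ γi γo (n+2) - 2*qseq αi αo βi βo R σ γi γo (n+1)
          + qseq αi αo βi βo R σ γi γo n
        = st14F αi αo βi βo R (n+2)
            * ((museq σ γi γo (n+2) - 2*museq σ γi γo (n+1) + museq σ γi γo n : ℝ):ℂ)
          + (st14F αi αo βi βo R (n+2) - st14F αi αo βi βo R (n+1))
            * ((museq σ γi γo (n+1) - museq σ γi γo n : ℝ):ℂ)
          + (st14F αi αo βi βo R (n+2) - st14F αi αo βi βo R (n+1))
            * ((museq σ γi γo (n+1) : ℝ):ℂ)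
          - (st14F αi αo βi βo R (n+1) - st14F αi αo βi βo R n)
            * ((museq σ γi γo n : ℝ):ℂ) := by
      rw [show n+2 = (n+1)+1 by ring]
      rw [st14_qseq_pos _ _ _ _ _ _ _ _ ((n+1)+1) (by omega),
        st14_qseq_pos _ _ _ _ _ _ _ _ (n+1) (by omega),
        st14_qseq_pos _ _ _ _ _ _ _ _ n hn1]
      push_cast
      ring
    -- bounds for the four pieces
    have t1 : norm (st14F αi αo βi βo R (n+2))
          * |museq σ γi γo (n+2) - 2*museq σ γi γo (n+1) + museq σ γi γo n|
        ≤ (2/(αi+αo)) * (6*σ*((n:ℝ)+1)) :=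
      mul_le_mul (st14_F_abs αi αo βi βo R hαi hαo hR (n+2) (by omega))
        (st14_mu_dd σ γi γo hσ n hn) (abs_nonneg _) (by positivity)
    have tF : norm (st14F αi αo βi βo R (n+2) - st14F αi αo βi βo R (n+1))
        ≤ 3/(αi+αo)^2 * (4*αo/(4:ℝ)^(n+1)) := by
      refine (st14_F_diff αi αo βi βo R hαi hαo hR (n+1) (n+2) (by omega) (by omega)).trans ?_
      refine mul_le_mul_of_nonneg_left ?_ (by positivity)
      have := st14_Aseq_diff αi αo R hαo hR (n+1) (by omega)
      rw [show (n+1)+1 = n+2 by ring] at this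
      exact this
    have tF' : norm (st14F αi αo βi βo R (n+1) - st14F αi αo βi βo R n)
        ≤ 3/(αi+αo)^2 * (4*αo/(4:ℝ)^n) := by
      refine (st14_F_diff αi αo βi βo R hαi hαo hR n (n+1) hn1 (by omega)).trans ?_
      exact mul_le_mul_of_nonneg_left (st14_Aseq_diff αi αo R hαo hR n hn1) (by positivity)
    have hcube : ((n:ℝ)+1)^3 ≤ (4:ℝ)^(n+1) := by
      have := st14_cube_le_pow (n+1) (by omega)
      push_cast at this
      exact this
    have hsq : ((n:ℝ)+1)^2 ≤ (4:ℝ)^(n+1) := by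
      nlinarith [sq_nonneg ((n:ℝ)+1)]
    have t2 : |museq σ γi γo (n+1) - museq σ γi γo n| ≤ (4*σ+2*|γo-γi|) * (4:ℝ)^(n+1) :=
      (st14_mu_diff σ γi γo hσ n hn).trans
        (mul_le_mul_of_nonneg_left hsq (by positivity))
    have t3 : |museq σ γi γo (n+1)| ≤ (2*σ+2*|γo-γi|) * (4:ℝ)^(n+1) := by
      have := st14_mu_abs σ γi γo hσ (n+1) (by omega)
      push_cast at this
      exact this.trans (mul_le_mul_of_nonneg_left hcube (by positivity))
    have t4 : |museq σ γi γo n| ≤ (2*σ+2*|γo-γi|) * (4:ℝ)^n :=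
      (st14_mu_abs σ γi γo hσ n hn).trans
        (mul_le_mul_of_nonneg_left (st14_cube_le_pow n hn1) (by positivity))
    have e1 : (3/(αi+αo)^2 * (4*αo/(4:ℝ)^(n+1))) * ((4*σ+2*|γo-γi|) * (4:ℝ)^(n+1))
        = 12*αo*(4*σ+2*|γo-γi|)/(αi+αo)^2 := by field_simp; ring
    have e2 : (3/(αi+αo)^2 * (4*αo/(4:ℝ)^(n+1))) * ((2*σ+2*|γo-γi|) * (4:ℝ)^(n+1))
        = 12*αo*(2*σ+2*|γo-γi|)/(αi+αo)^2 := by field_simp; ring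
    have e3 : (3/(αi+αo)^2 * (4*αo/(4:ℝ)^n)) * ((2*σ+2*|γo-γi|) * (4:ℝ)^n)
        = 12*αo*(2*σ+2*|γo-γi|)/(αi+αo)^2 := by field_simp; ring
    have h1 : (1:ℝ) ≤ (n:ℝ)+1 := by linarith
    calc norm (qseq αi αo βi βo R σ γi γo (n+2) - 2*qseq αi αo βi βo R σ γi γo (n+1)
          + qseq αi αo βi βo R σ γi γo n)
        ≤ norm (st14F αi αo βi βo R (n+2))
            * |museq σ γi γo (n+2) - 2*museq σ γi γo (n+1) + museq σ γi γo n|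
          + norm (st14F αi αo βi βo R (n+2) - st14F αi αo βi βo R (n+1))
            * |museq σ γi γo (n+1) - museq σ γi γo n|
          + norm (st14F αi αo βi βo R (n+2) - st14F αi αo βi βo R (n+1))
            * |museq σ γi γo (n+1)|
          + norm (st14F αi αo βi βo R (n+1) - st14F αi αo βi βo R n)
            * |museq σ γi γo n| := by
          rw [decomp]
          have tri : ∀ a b c d : ℂ, norm (a + b + c - d)
              ≤ norm a + norm b + norm c + norm d := by
            intro a b c d
            have h1 := st14_abs_sub (a+b+c) d
            have h2 := norm_add_le (a+b) c
            have h3 := norm_add_le a b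
            linarith
          refine (tri _ _ _ _).trans (le_of_eq ?_)
          simp only [norm_mul, st14_norm_ofReal]
      _ ≤ (2/(αi+αo)) * (6*σ*((n:ℝ)+1))
          + (3/(αi+αo)^2 * (4*αo/(4:ℝ)^(n+1))) * ((4*σ+2*|γo-γi|) * (4:ℝ)^(n+1))
          + (3/(αi+αo)^2 * (4*αo/(4:ℝ)^(n+1))) * ((2*σ+2*|γo-γi|) * (4:ℝ)^(n+1))
          + (3/(αi+αo)^2 * (4*αo/(4:ℝ)^n)) * ((2*σ+2*|γo-γi|) * (4:ℝ)^n) := by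
          refine add_le_add (add_le_add (add_le_add t1 ?_) ?_) ?_
          · exact mul_le_mul tF t2 (abs_nonneg _) (by positivity)
          · exact mul_le_mul tF t3 (abs_nonneg _) (by positivity)
          · exact mul_le_mul tF' t4 (abs_nonneg _) (by positivity)
      _ = (12*σ/(αi+αo)) * ((n:ℝ)+1)
          + (12*αo*((4*σ+2*|γo-γi|) + 2*(2*σ+2*|γo-γi|))/(αi+αo)^2) * 1 := by
          rw [e1, e2, e3]; ring
      _ ≤ (12*σ/(αi+αo)) * ((n:ℝ)+1)
          + (12*αo*((4*σ+2*|γo-γi|) + 2*(2*σ+2*|γo-γi|))/(αi+αo)^2) * ((n:ℝ)+1) :=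
          add_le_add_right (mul_le_mul_of_nonneg_left h1 (by positivity)) _
      _ ≤ _ := by
          nlinarith [mul_nonneg (mul_nonneg (by norm_num : (0:ℝ) ≤ 10) hQ0)
            (by linarith : (0:ℝ) ≤ (n:ℝ)+1)]

lemma st14_q_E (αi αo βi βo R σ γi γo : ℝ)
    (hαi : 0 < αi) (hαo : 0 < αo) (hR : 2 ≤ R) (hσ : 0 < σ) :
    ∃ C : ℝ, 0 ≤ C ∧ ∀ n : ℤ, 0 ≤ n →
      norm (qseq αi αo βi βo R σ γi γo n *
          (qseq αi αo βi βo R σ γi γo (n+1) - qseq αi αo βi βo R σ γi γo (n+2))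
        + qseq αi αo βi βo R σ γi γo (n+2) *
          (qseq αi αo βi βo R σ γi γo (n+1) - qseq αi αo βi βo R σ γi γo n))
        ≤ C * ((n:ℝ)+1)^4 := by
  obtain ⟨Q, hQ0, hQ⟩ := st14_q_abs αi αo βi βo R σ γi γo hαi hαo hR hσ
  obtain ⟨D, hD0, hD⟩ := st14_q_diff αi αo βi βo R σ γi γo hαi hαo hR hσ
  obtain ⟨E, hE0, hE⟩ := st14_q_dd αi αo βi βo R σ γi γo hαi hαo hR hσ
  refine ⟨Q*E + 8*D^2, by positivity, ?_⟩
  intro n hn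
  have hx0 : (0:ℝ) ≤ (n:ℝ) := by exact_mod_cast hn
  have e : qseq αi αo βi βo R σ γi γo n *
          (qseq αi αo βi βo R σ γi γo (n+1) - qseq αi αo βi βo R σ γi γo (n+2))
        + qseq αi αo βi βo R σ γi γo (n+2) *
          (qseq αi αo βi βo R σ γi γo (n+1) - qseq αi αo βi βo R σ γi γo n)
      = 2*((qseq αi αo βi βo R σ γi γo (n+1) - qseq αi αo βi βo R σ γi γo n)
            * (qseq αi αo βi βo R σ γi γo (n+2) - qseq αi αo βi βo R σ γi γo (n+1)))
        - qseq αi αo βi βo R σ γi γo (n+1) * (qseq αi αo βi βo R σ γi γo (n+2)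
            - 2*qseq αi αo βi βo R σ γi γo (n+1) + qseq αi αo βi βo R σ γi γo n) := by
    ring
  have hq1 : norm (qseq αi αo βi βo R σ γi γo (n+1)) ≤ Q*((n:ℝ)+1)^3 := by
    have := hQ (n+1) (by omega)
    push_cast at this
    exact this
  have hd1 := hD n hn
  have hd2 : norm (qseq αi αo βi βo R σ γi γo (n+2)
      - qseq αi αo βi βo R σ γi γo (n+1)) ≤ D*((n:ℝ)+2)^2 := by
    have := hD (n+1) (by omega)
    rw [show n+1+1 = n+2 by ring] at this
    push_cast at this
    calc norm _ ≤ D * ((n:ℝ)+1+1)^2 := this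
      _ = D*((n:ℝ)+2)^2 := by ring
  have hdd := hE n hn
  rw [e]
  calc norm _
      ≤ norm (2*((qseq αi αo βi βo R σ γi γo (n+1) - qseq αi αo βi βo R σ γi γo n)
            * (qseq αi αo βi βo R σ γi γo (n+2) - qseq αi αo βi βo R σ γi γo (n+1))))
        + norm (qseq αi αo βi βo R σ γi γo (n+1) * (qseq αi αo βi βo R σ γi γo (n+2)
            - 2*qseq αi αo βi βo R σ γi γo (n+1) + qseq αi αo βi βo R σ γi γo n)) :=
        st14_abs_sub _ _
    _ = 2*(norm (qseq αi αo βi βo R σ γi γo (n+1) - qseq αi αo βi βo R σ γi γo n)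
            * norm (qseq αi αo βi βo R σ γi γo (n+2) - qseq αi αo βi βo R σ γi γo (n+1)))
        + norm (qseq αi αo βi βo R σ γi γo (n+1)) * norm (qseq αi αo βi βo R σ γi γo (n+2)
            - 2*qseq αi αo βi βo R σ γi γo (n+1) + qseq αi αo βi βo R σ γi γo n) := by
        simp only [norm_mul]
        norm_num
    _ ≤ 2*((D*((n:ℝ)+1)^2) * (D*((n:ℝ)+2)^2)) + (Q*((n:ℝ)+1)^3) * (E*((n:ℝ)+1)) := by
        refine add_le_add ?_ (mul_le_mul hq1 hdd (norm_nonneg _) (by positivity))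
        refine mul_le_mul_of_nonneg_left (mul_le_mul hd1 hd2 (norm_nonneg _) (by positivity))
          (by norm_num)
    _ ≤ (Q*E + 8*D^2) * ((n:ℝ)+1)^4 := by
        have k1 : ((n:ℝ)+2)^2 ≤ 4*((n:ℝ)+1)^2 := by nlinarith
        have k2 : (0:ℝ) ≤ D^2*((n:ℝ)+1)^2 := by positivity
        nlinarith [mul_le_mul_of_nonneg_left k1 k2]

lemma st14_q_neg (αi αo βi βo R σ γi γo : ℝ) (hR : 2 ≤ R) (n : ℤ) :
    qseq αi αo βi βo R σ γi γo (-n) = (starRingEnd ℂ) (qseq αi αo βi βo R σ γi γo n) := by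
  unfold qseq
  rw [st14_Aseq_neg αi αo R hR n, st14_mu_neg, Int.sign_neg]
  simp only [map_mul, map_div₀, map_add, Complex.conj_ofReal, Complex.conj_I, map_intCast,
    Int.cast_neg]
  ring

theorem statement14 (αi αo βi βo R σ γi γo : ℝ)
    (hαi : 0 < αi) (hαo : 0 < αo) (hβi : 0 ≤ βi) (hβo : 0 ≤ βo) (hR : 2 ≤ R)
    (hσ : 0 < σ) :
    (∃ C : ℝ, ∀ n : ℤ, n ≠ 0 →
      ‖qseq0 αi αo βi βo R σ γi γo (n + 1) - qseq0 αi αo βi βo R σ γi γo n‖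
        / (n : ℝ) ^ 2 ≤ C)
    ∧ ∃ C : ℝ, ∀ n : ℤ, n ≠ 0 →
      ‖qseq0 αi αo βi βo R σ γi γo n *
          (qseq0 αi αo βi βo R σ γi γo (n + 1) - qseq0 αi αo βi βo R σ γi γo (n + 2))
        + qseq0 αi αo βi βo R σ γi γo (n + 2) *
          (qseq0 αi αo βi βo R σ γi γo (n + 1) - qseq0 αi αo βi βo R σ γi γo n)‖
        / (n : ℝ) ^ 4 ≤ C := by
  obtain ⟨Q, hQ0, hQ⟩ := st14_q_abs αi αo βi βo R σ γi γo hαi hαo hR hσ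
  obtain ⟨D, hD0, hD⟩ := st14_q_diff αi αo βi βo R σ γi γo hαi hαo hR hσ
  obtain ⟨C, hC0, hC⟩ := st14_q_E αi αo βi βo R σ γi γo hαi hαo hR hσ
  constructor
  · refine ⟨4*D, ?_⟩
    intro n hn
    have hncast : ((n:ℝ)) ≠ 0 := Int.cast_ne_zero.mpr hn
    have hn2 : (0:ℝ) < (n:ℝ)^2 := by positivity
    rw [st14_qseq0_eq, st14_qseq0_eq, div_le_iff₀ hn2]
    rcases lt_or_gt_of_ne hn with h | h
    · -- n ≤ -1
      obtain ⟨k, hk0, rfl⟩ : ∃ k, 0 ≤ k ∧ n = -(k+1) := ⟨-n-1, by omega, by omega⟩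
      rw [show -(k+1)+1 = -k by ring, st14_q_neg αi αo βi βo R σ γi γo hR k,
        st14_q_neg αi αo βi βo R σ γi γo hR (k+1), ← map_sub, Complex.norm_conj,
        show qseq αi αo βi βo R σ γi γo k - qseq αi αo βi βo R σ γi γo (k+1)
          = -(qseq αi αo βi βo R σ γi γo (k+1) - qseq αi αo βi βo R σ γi γo k) by ring,
        norm_neg]
      have hb := hD k hk0
      have hc : ((-(k+1) : ℤ):ℝ)^2 = ((k:ℝ)+1)^2 := by push_cast; ring
      rw [hc]
      nlinarith [sq_nonneg ((k:ℝ)+1)]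
    · -- n ≥ 1
      have hx1 : (1:ℝ) ≤ (n:ℝ) := by exact_mod_cast h
      have hb := hD n (by omega)
      nlinarith [hb, hD0, sq_nonneg ((n:ℝ)-1), sq_nonneg ((n:ℝ)+1)]
  · refine ⟨16*C + 2*Q^2, ?_⟩
    intro n hn
    have hncast : ((n:ℝ)) ≠ 0 := Int.cast_ne_zero.mpr hn
    have hn4 : (0:ℝ) < (n:ℝ)^4 := by positivity
    rw [st14_qseq0_eq, st14_qseq0_eq, st14_qseq0_eq, div_le_iff₀ hn4]
    rcases lt_trichotomy n (-1) with h | h | h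
    · -- n ≤ -2
      obtain ⟨k, hk0, rfl⟩ : ∃ k, 0 ≤ k ∧ n = -(k+2) := ⟨-n-2, by omega, by omega⟩
      rw [show -(k+2)+1 = -(k+1) by ring, show -(k+2)+2 = -k by ring,
        st14_q_neg αi αo βi βo R σ γi γo hR k, st14_q_neg αi αo βi βo R σ γi γo hR (k+1),
        st14_q_neg αi αo βi βo R σ γi γo hR (k+2), ← map_sub, ← map_sub,
        ← map_mul, ← map_mul, ← map_add, Complex.norm_conj]
      have hb := hC k hk0
      have e : qseq αi αo βi βo R σ γi γo (k+2) *
            (qseq αi αo βi βo R σ γi γo (k+1) - qseq αi αo βi βo R σ γi γo k)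
          + qseq αi αo βi βo R σ γi γo k *
            (qseq αi αo βi βo R σ γi γo (k+1) - qseq αi αo βi βo R σ γi γo (k+2))
          = qseq αi αo βi βo R σ γi γo k *
            (qseq αi αo βi βo R σ γi γo (k+1) - qseq αi αo βi βo R σ γi γo (k+2))
          + qseq αi αo βi βo R σ γi γo (k+2) *
            (qseq αi αo βi βo R σ γi γo (k+1) - qseq αi αo βi βo R σ γi γo k) := by ring
      rw [e]
      have hc : ((-(k+2) : ℤ):ℝ)^4 = ((k:ℝ)+2)^4 := by push_cast; ring
      rw [hc]
      have hk0' : (0:ℝ) ≤ (k:ℝ) := by exact_mod_cast hk0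
      have hmono : ((k:ℝ)+1)^4 ≤ ((k:ℝ)+2)^4 :=
        pow_le_pow_left₀ (by linarith) (by linarith) 4
      have hCm : C * ((k:ℝ)+1)^4 ≤ (16*C + 2*Q^2) * ((k:ℝ)+2)^4 := by
        nlinarith [mul_le_mul_of_nonneg_left hmono hC0, sq_nonneg Q,
          pow_nonneg (by linarith : (0:ℝ) ≤ (k:ℝ)+2) 4, sq_nonneg (Q*((k:ℝ)+2)^2)]
      exact hb.trans hCm
    · -- n = -1
      subst h
      rw [show (-1:ℤ)+1 = 0 by ring, show (-1:ℤ)+2 = 1 by ring, st14_qseq_zero]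
      have e : qseq αi αo βi βo R σ γi γo (-1) * (0 - qseq αi αo βi βo R σ γi γo 1)
          + qseq αi αo βi βo R σ γi γo 1 * (0 - qseq αi αo βi βo R σ γi γo (-1))
          = -(2*(qseq αi αo βi βo R σ γi γo (-1) * qseq αi αo βi βo R σ γi γo 1)) := by ring
      rw [e, norm_neg, norm_mul, norm_mul,
        show (-1:ℤ) = -(1:ℤ) by ring, st14_q_neg αi αo βi βo R σ γi γo hR 1,
        Complex.norm_conj]
      have h1 : norm (qseq αi αo βi βo R σ γi γo 1) ≤ Q := by
        have := hQ 1 (by norm_num)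
        norm_num at this
        exact this
      have habs : norm (2:ℂ) = 2 := by norm_num
      rw [habs]
      have hc : (((-1:ℤ)):ℝ)^4 = 1 := by norm_num
      rw [hc, mul_one]
      nlinarith [norm_nonneg (qseq αi αo βi βo R σ γi γo 1)]
    · -- n ≥ 1
      have hn1 : 1 ≤ n := by omega
      have hx1 : (1:ℝ) ≤ (n:ℝ) := by exact_mod_cast hn1
      have hb := hC n (by omega)
      have k1 : ((n:ℝ)+1)^2 ≤ 4*(n:ℝ)^2 := by nlinarith
      have k2 : ((n:ℝ)+1)^4 ≤ 16*(n:ℝ)^4 := by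
        nlinarith [mul_le_mul k1 k1 (sq_nonneg ((n:ℝ)+1)) (by positivity : (0:ℝ) ≤ 4*(n:ℝ)^2)]
      have p1 : (0:ℝ) ≤ (n:ℝ)^4 := by positivity
      have p2 := mul_le_mul_of_nonneg_left k2 hC0
      have p3 : (0:ℝ) ≤ 2*Q^2*(n:ℝ)^4 := by positivity
      calc norm _ ≤ C * ((n:ℝ)+1)^4 := hb
        _ ≤ (16*C + 2*Q^2) * (n:ℝ)^4 := by nlinarith [p1, p2, p3]
end

section
/- Let λ ∈ ℂ satisfy Re λ > max(0, sup_{n ∈ ℤ \ {0}} Re q_n), and set Q_n^λ := (λ − q_n)^{−1} (with q_0 := 0). Then sup_{n ∈ ℤ \ {0}} |n|⁴ · | Q_{n+1}^λ − Q_n^λ | < ∞. -/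
open Complex Filter

/-! ### Auxiliary lemmas -/

lemma sq_add_one_le_four_pow' (m : ℕ) : ((m:ℝ))^2 + 1 ≤ 4 ^ m := by
  have h2 : (m:ℝ) + 1 ≤ 2^m := by exact_mod_cast (Nat.lt_two_pow_self (n := m))
  have h4 : (4:ℝ)^m = ((2:ℝ)^m)^2 := by
    rw [← pow_mul, mul_comm, pow_mul]; norm_num
  have hm0 : (0:ℝ) ≤ m := Nat.cast_nonneg m
  have hsq := mul_self_le_mul_self (by positivity : (0:ℝ) ≤ (m:ℝ)+1) h2
  rw [h4]; nlinarith [hsq]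

lemma four_le_four_pow' (m : ℕ) (hm : 1 ≤ m) : (4:ℝ) ≤ 4 ^ m :=
  le_self_pow₀ (by norm_num) (by omega)

lemma abs_cast_ge_one (n : ℤ) (hn : n ≠ 0) : (1:ℝ) ≤ |(n:ℝ)| := by
  rw [← Int.cast_abs]; exact_mod_cast Int.one_le_abs hn

lemma int_one_le_sq (n : ℤ) (hn : n ≠ 0) : (1:ℝ) ≤ (n:ℝ)^2 := by
  have h1 := abs_cast_ge_one n hn
  nlinarith [h1, _root_.sq_abs ((n:ℝ))]

lemma tfactor_bounds (R : ℝ) (hR : 2 ≤ R) (n : ℤ) (hn : n ≠ 0) :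
    1 ≤ (n.sign : ℝ) * ((R ^ (2 * n) + 1) / (R ^ (2 * n) - 1)) ∧
    (n.sign : ℝ) * ((R ^ (2 * n) + 1) / (R ^ (2 * n) - 1)) ≤ 1 + 3 / (n:ℝ)^2 := by
  have hn2 : (1:ℝ) ≤ (n:ℝ)^2 := int_one_le_sq n hn
  have hy0 : (0:ℝ) ≤ 3 / (n:ℝ)^2 := by positivity
  have hy : 3 / (n:ℝ)^2 * (n:ℝ)^2 = 3 := by
    field_simp
  have hR2 : (4:ℝ) ≤ R^2 := by nlinarith
  rcases hn.lt_or_gt with hneg | hpos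
  · -- n < 0
    set m := (-n).toNat with hm
    have hm1 : 1 ≤ m := by omega
    have hcast : ((m:ℝ)) = -(n:ℝ) := by
      have : ((m:ℤ):ℝ) = ((-n:ℤ):ℝ) := by norm_cast; omega
      push_cast at this ⊢; linarith
    have hz : R ^ (2*n) = ((R^2)^m)⁻¹ := by
      rw [show 2*n = -((2*m:ℕ):ℤ) by push_cast; omega, zpow_neg, zpow_natCast, pow_mul]
    have hge : (4:ℝ)^m ≤ (R^2)^m := pow_le_pow_left₀ (by norm_num) hR2 m
    have hRm4 : (4:ℝ) ≤ (R^2)^m := le_trans (four_le_four_pow' m hm1) hge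
    have hRmn : (n:ℝ)^2 + 1 ≤ (R^2)^m := by
      have := sq_add_one_le_four_pow' m
      rw [hcast] at this; nlinarith [hge]
    have hRm0 : (0:ℝ) < (R^2)^m := by positivity
    set r := R ^ (2*n) with hr
    have hr0 : 0 < r := by rw [hz]; positivity
    have hA : r * 4 ≤ 1 := by
      rw [hz, inv_mul_le_iff₀ hRm0]; linarith
    have hB : r * ((n:ℝ)^2 + 1) ≤ 1 := by
      rw [hz, inv_mul_le_iff₀ hRm0]; linarith
    have hden : 0 < 1 - r := by linarith
    have hsgn : ((n.sign : ℤ) : ℝ) = -1 := by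
      rw [Int.sign_eq_neg_one_iff_neg.mpr hneg]; norm_num
    have hconv : (n.sign : ℝ) * ((r + 1) / (r - 1)) = (r + 1) / (1 - r) := by
      rw [hsgn, show (1 - r) = -(r - 1) by ring, div_neg]; ring
    rw [hconv]
    constructor
    · rw [le_div_iff₀ hden]; linarith
    · rw [div_le_iff₀ hden]
      have hprod : 0 ≤ 3 / (n:ℝ)^2 * (1 - r * ((n:ℝ)^2 + 1)) :=
        mul_nonneg hy0 (by linarith)
      have hy2 : 3 / (n:ℝ)^2 * (n:ℝ)^2 * r = 3 * r := by rw [hy]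
      nlinarith [hprod, hy2, hr0.le, mul_nonneg hr0.le hy0]
  · -- 0 < n
    set m := n.toNat with hm
    have hm1 : 1 ≤ m := by omega
    have hcast : ((m:ℝ)) = (n:ℝ) := by exact_mod_cast Int.toNat_of_nonneg hpos.le
    have hz : R ^ (2*n) = (R^2)^m := by
      rw [show 2*n = ((2*m:ℕ):ℤ) by push_cast; omega, zpow_natCast, pow_mul]
    have hge : (4:ℝ)^m ≤ (R^2)^m := pow_le_pow_left₀ (by norm_num) hR2 m
    set r := R ^ (2*n) with hr
    have hr4 : (4:ℝ) ≤ r := by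
      rw [hz]; exact le_trans (four_le_four_pow' m hm1) hge
    have hrn : (n:ℝ)^2 + 1 ≤ r := by
      have := sq_add_one_le_four_pow' m
      rw [hcast] at this; rw [hz]; nlinarith [hge]
    have hden : 0 < r - 1 := by linarith
    have hsgn : ((n.sign : ℤ) : ℝ) = 1 := by
      rw [Int.sign_eq_one_iff_pos.mpr hpos]; norm_num
    rw [hsgn, one_mul]
    constructor
    · rw [le_div_iff₀ hden]; linarith
    · rw [div_le_iff₀ hden]
      have hprod : 0 ≤ 3 / (n:ℝ)^2 * (r - 1 - (n:ℝ)^2) :=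
        mul_nonneg hy0 (by linarith)
      nlinarith [hprod, hy]

lemma aseq_bounds (αi αo R : ℝ) (hαo : 0 < αo) (hR : 2 ≤ R) (n : ℤ) (hn : n ≠ 0) :
    αi + αo ≤ Aseq αi αo R n ∧ Aseq αi αo R n ≤ αi + αo + 3*αo/(n:ℝ)^2 := by
  obtain ⟨h1, h2⟩ := tfactor_bounds R hR n hn
  have hn2 := int_one_le_sq n hn
  have hy : 3 / (n:ℝ)^2 * (n:ℝ)^2 = 3 := by field_simp
  unfold Aseq
  constructor
  · nlinarith [mul_le_mul_of_nonneg_right h1 hαo.le]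
  · have hmul := mul_le_mul_of_nonneg_right h2 hαo.le
    have hexp : (1 + 3/(n:ℝ)^2) * αo = αo + 3*αo/(n:ℝ)^2 := by ring
    nlinarith [hmul]

lemma aseq_ub (αi αo R : ℝ) (hαo : 0 < αo) (hR : 2 ≤ R) (n : ℤ) (hn : n ≠ 0) :
    Aseq αi αo R n ≤ αi + 4*αo := by
  obtain ⟨-, h2⟩ := aseq_bounds αi αo R hαo hR n hn
  have hn2 := int_one_le_sq n hn
  have hy0 : 3*αo/(n:ℝ)^2 ≤ 3*αo := by
    rw [div_le_iff₀ (by nlinarith)]; nlinarith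
  linarith

lemma museq_abs_le (σ γi γo : ℝ) (hσ : 0 < σ) (n : ℤ) (hn : n ≠ 0) :
    |museq σ γi γo n| ≤ (|σ - 2*(γo - γi)| + σ) * |(n:ℝ)|^3 := by
  unfold museq
  set x := |(n:ℝ)| with hx
  have hx1 : 1 ≤ x := abs_cast_ge_one n hn
  set c := σ - 2*(γo - γi) with hc
  have hxx : x^2 = (n:ℝ)^2 := _root_.sq_abs _
  rw [show (σ - 2 * (γo - γi) - σ * (n:ℝ)^2) = c - σ * (n:ℝ)^2 by rw [hc]]
  rw [← hxx, abs_mul, _root_.abs_of_nonneg (by linarith : (0:ℝ) ≤ x)]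
  have h1 : |c - σ * x^2| ≤ |c| + σ*x^2 := by
    calc |c - σ*x^2| ≤ |c| + |σ*x^2| := abs_sub _ _
      _ = |c| + σ*x^2 := by rw [_root_.abs_of_nonneg (show (0:ℝ) ≤ σ*x^2 by positivity)]
  calc x * |c - σ*x^2| ≤ x * (|c| + σ*x^2) := by nlinarith [abs_nonneg (c - σ*x^2)]
    _ ≤ (|c| + σ) * x^3 := by
        have hx3 : 0 ≤ x^3 - x := by nlinarith [hx1]
        nlinarith [mul_nonneg (abs_nonneg c) hx3]

lemma museq_ub (σ γi γo : ℝ) (hσ : 0 < σ) (n : ℤ) :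
    museq σ γi γo n ≤ |σ - 2*(γo - γi)| * max 1 (|σ - 2*(γo - γi)|/σ) := by
  unfold museq
  set c := σ - 2*(γo - γi) with hc
  set t0 := max 1 (|c|/σ) with ht0
  set x := |(n:ℝ)| with hx
  have hx0 : 0 ≤ x := abs_nonneg _
  have hxx : x^2 = (n:ℝ)^2 := _root_.sq_abs _
  have h1 : x * (c - σ*(n:ℝ)^2) ≤ x*|c| - σ*x^3 := by
    rw [← hxx]; nlinarith [le_abs_self c, hx0]
  have ht01 : (1:ℝ) ≤ t0 := le_max_left _ _
  have ht0c : |c|/σ ≤ t0 := le_max_right _ _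
  have ht0c' : |c| ≤ σ * t0 := by
    rw [div_le_iff₀ hσ] at ht0c; linarith
  have hM0 : 0 ≤ |c| * t0 := mul_nonneg (abs_nonneg c) (by linarith)
  rcases le_total x t0 with h | h
  · have hst : x*|c| ≤ t0*|c| := by nlinarith [abs_nonneg c]
    nlinarith [mul_nonneg hσ.le (mul_nonneg hx0 (mul_nonneg hx0 hx0))]
  · have hsq : t0 ≤ x^2 := by
      nlinarith [mul_nonneg (sub_nonneg.mpr h) (by linarith : (0:ℝ) ≤ x + t0)]
    have h2 : |c| ≤ σ * x^2 := by nlinarith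
    have h3 : x * (σ*x^2 - |c|) ≥ 0 := mul_nonneg hx0 (by linarith)
    nlinarith [h1, h3]

lemma museq_neg (σ γi γo : ℝ) (hσ : 0 < σ) (n : ℤ)
    (h : max 1 (2*|σ - 2*(γo - γi)|/σ) ≤ |(n:ℝ)|) :
    museq σ γi γo n ≤ -(σ/2) * |(n:ℝ)|^3 := by
  unfold museq
  set c := σ - 2*(γo - γi) with hc
  set x := |(n:ℝ)| with hx
  have hx1 : 1 ≤ x := le_trans (le_max_left _ _) h
  have hx0 : (0:ℝ) ≤ x := by linarith
  have hxc : 2*|c|/σ ≤ x := le_trans (le_max_right _ _) h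
  have hxc' : 2*|c| ≤ σ * x := by
    rw [div_le_iff₀ hσ] at hxc; linarith
  have hxx : x^2 = (n:ℝ)^2 := _root_.sq_abs _
  have h1 : x * (c - σ*(n:ℝ)^2) ≤ x*|c| - σ*x^3 := by
    rw [← hxx]; nlinarith [le_abs_self c]
  have hstep : 2*|c| ≤ σ*x^2 := by
    nlinarith [mul_nonneg hσ.le (mul_nonneg hx0 (by linarith : (0:ℝ) ≤ x - 1))]
  have h2 := mul_le_mul_of_nonneg_left hstep hx0
  nlinarith [h1, h2]

lemma museq_diff (σ γi γo : ℝ) (hσ : 0 < σ) (n : ℤ) (h2n : 2 ≤ n ∨ n ≤ -2) :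
    |museq σ γi γo (n+1) - museq σ γi γo n| ≤ (|σ - 2*(γo - γi)| + 7*σ) * (n:ℝ)^2 := by
  set c := σ - 2*(γo - γi) with hc
  set x := (n:ℝ) with hx
  rcases h2n with hpos | hneg
  · have hx2 : (2:ℝ) ≤ x := by rw [hx]; exact_mod_cast hpos
    have e1 : museq σ γi γo (n+1) = (x+1) * (c - σ*(x+1)^2) := by
      unfold museq; push_cast
      rw [_root_.abs_of_nonneg (by linarith : (0:ℝ) ≤ x+1)]
    have e2 : museq σ γi γo n = x * (c - σ*x^2) := by
      unfold museq; push_cast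
      rw [_root_.abs_of_nonneg (by linarith : (0:ℝ) ≤ x)]
    rw [e1, e2, show (x+1)*(c - σ*(x+1)^2) - x*(c-σ*x^2) = c - σ*(3*x^2+3*x+1) by ring]
    have ha1 : 0 ≤ σ*(4*x^2 - 3*x - 1) := mul_nonneg hσ.le (by nlinarith)
    have ha2 : 0 ≤ σ*(10*x^2 + 3*x + 1) := mul_nonneg hσ.le (by nlinarith)
    have ha3 : |c| ≤ |c| * x^2 := by
      nlinarith [mul_nonneg (abs_nonneg c) (show (0:ℝ) ≤ x^2 - 1 by nlinarith)]
    rw [abs_le]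
    constructor
    · nlinarith [neg_abs_le c, le_abs_self c, ha1, ha2, ha3]
    · nlinarith [neg_abs_le c, le_abs_self c, ha1, ha2, ha3]
  · have hx2 : x ≤ -2 := by rw [hx]; exact_mod_cast hneg
    have e1 : museq σ γi γo (n+1) = -(x+1) * (c - σ*(x+1)^2) := by
      unfold museq; push_cast
      rw [_root_.abs_of_nonpos (by linarith : (x:ℝ)+1 ≤ 0)]
    have e2 : museq σ γi γo n = -x * (c - σ*x^2) := by
      unfold museq; push_cast
      rw [_root_.abs_of_nonpos (by linarith : (x:ℝ) ≤ 0)]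
    rw [e1, e2, show -(x+1)*(c - σ*(x+1)^2) - (-x*(c-σ*x^2)) = -c + σ*(3*x^2+3*x+1) by ring]
    have ha1 : 0 ≤ σ*(4*x^2 - 3*x - 1) := mul_nonneg hσ.le (by nlinarith)
    have ha2 : 0 ≤ σ*(10*x^2 + 3*x + 1) := mul_nonneg hσ.le (by nlinarith)
    have ha3 : |c| ≤ |c| * x^2 := by
      nlinarith [mul_nonneg (abs_nonneg c) (show (0:ℝ) ≤ x^2 - 1 by nlinarith)]
    rw [abs_le]
    constructor
    · nlinarith [neg_abs_le c, le_abs_self c, ha1, ha2, ha3]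
    · nlinarith [neg_abs_le c, le_abs_self c, ha1, ha2, ha3]

/-- The numerator of the Fourier-symbol coefficient. -/
noncomputable def Fc (A B s : ℝ) : ℂ :=
  ((A:ℝ):ℂ) + Complex.I * ((s:ℝ):ℂ) * ((B:ℝ):ℂ)

lemma Fc_mul_re (A B s μ d : ℝ) (hd : d ≠ 0) :
    (Fc A B s / ((d:ℝ):ℂ) * ((μ:ℝ):ℂ)).re = A * μ / d := by
  have h : Fc A B s / ((d:ℝ):ℂ) * ((μ:ℝ):ℂ)
      = ((A*μ/d : ℝ):ℂ) + ((s*B*μ/d : ℝ):ℂ) * Complex.I := by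
    unfold Fc; push_cast
    field_simp
  rw [h]; simp

lemma Fc_abs_le (A B s : ℝ) (hs : |s| ≤ 1) (hA : 0 ≤ A) :
    ‖Fc A B s‖ ≤ A + |B| := by
  unfold Fc
  calc ‖((A:ℝ):ℂ) + Complex.I * ((s:ℝ):ℂ) * ((B:ℝ):ℂ)‖
      ≤ ‖((A:ℝ):ℂ)‖ + ‖Complex.I * ((s:ℝ):ℂ) * ((B:ℝ):ℂ)‖ :=
        norm_add_le _ _
    _ = |A| + 1 * |s| * |B| := by
        simp [norm_mul, Complex.norm_real, Complex.norm_I]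
    _ ≤ A + |B| := by
        rw [_root_.abs_of_nonneg hA]
        nlinarith [abs_nonneg B, abs_nonneg s]

set_option maxHeartbeats 1000000 in
lemma Fc_diff (A₁ A₂ B s a b : ℝ) (hs : |s| ≤ 1) (ha : 0 < a)
    (h1 : a ≤ A₁) (h1' : A₁ ≤ b) (h2 : a ≤ A₂) (h2' : A₂ ≤ b) :
    ‖Fc A₁ B s / ((A₁^2+B^2 : ℝ):ℂ) - Fc A₂ B s / ((A₂^2+B^2 : ℝ):ℂ)‖
      ≤ (B^2 + b^2 + 2 * |B| * b)/a^4 * |A₁ - A₂| := by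
  have hd1 : (0:ℝ) < A₁^2 + B^2 := by nlinarith
  have hd2 : (0:ℝ) < A₂^2 + B^2 := by nlinarith
  have hd1' : ((A₁^2+B^2 : ℝ):ℂ) ≠ 0 := by exact_mod_cast hd1.ne'
  have hd2' : ((A₂^2+B^2 : ℝ):ℂ) ≠ 0 := by exact_mod_cast hd2.ne'
  have key : Fc A₁ B s / ((A₁^2+B^2 : ℝ):ℂ) - Fc A₂ B s / ((A₂^2+B^2 : ℝ):ℂ)
      = ((A₁ - A₂ : ℝ):ℂ) * (((B^2 - A₁*A₂ : ℝ):ℂ) - Complex.I * ((s:ℝ):ℂ) * ((B*(A₁+A₂) : ℝ):ℂ))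
        / (((A₁^2+B^2)*(A₂^2+B^2) : ℝ):ℂ) := by
    have hcast : (((A₁^2+B^2)*(A₂^2+B^2) : ℝ):ℂ) = ((A₁^2+B^2:ℝ):ℂ) * ((A₂^2+B^2:ℝ):ℂ) := by
      push_cast; ring
    rw [hcast, div_sub_div _ _ hd1' hd2',
      div_eq_div_iff (mul_ne_zero hd1' hd2') (mul_ne_zero hd1' hd2')]
    unfold Fc; push_cast; ring
  rw [key, norm_div, norm_mul, Complex.norm_real, Complex.norm_real, Real.norm_eq_abs, Real.norm_eq_abs]
  set N := ‖((B^2 - A₁*A₂ : ℝ):ℂ) - Complex.I * ((s:ℝ):ℂ) * ((B*(A₁+A₂) : ℝ):ℂ)‖ with hN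
  have hnum : N ≤ B^2 + b^2 + 2 * |B| * b := by
    have htri : N ≤ ‖((B^2 - A₁*A₂ : ℝ):ℂ)‖
          + ‖Complex.I * ((s:ℝ):ℂ) * ((B*(A₁+A₂) : ℝ):ℂ)‖ := by
      rw [hN, sub_eq_add_neg]
      refine le_trans (norm_add_le _ _) ?_
      rw [norm_neg]
    have t1 : ‖((B^2 - A₁*A₂ : ℝ):ℂ)‖ = |B^2 - A₁*A₂| := by rw [Complex.norm_real, Real.norm_eq_abs]
    have t2 : ‖Complex.I * ((s:ℝ):ℂ) * ((B*(A₁+A₂) : ℝ):ℂ)‖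
        = |s| * |B*(A₁+A₂)| := by
      rw [norm_mul, norm_mul, Complex.norm_I, Complex.norm_real, Complex.norm_real, one_mul, Real.norm_eq_abs, Real.norm_eq_abs]
    have e1 : |B^2 - A₁*A₂| ≤ B^2 + b^2 := by
      rw [abs_le]; constructor <;> nlinarith [sq_nonneg B]
    have e2 : |B*(A₁+A₂)| = |B| * (A₁+A₂) := by
      rw [abs_mul, _root_.abs_of_nonneg (by linarith : (0:ℝ) ≤ A₁+A₂)]
    have e3 : |s| * |B*(A₁+A₂)| ≤ 2 * |B| * b := by
      rw [e2]
      nlinarith [abs_nonneg s, abs_nonneg B, mul_nonneg (abs_nonneg B) (by linarith : (0:ℝ) ≤ A₁+A₂)]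
    rw [t1, t2] at htri
    linarith [e1, e3]
  have hden : a^4 ≤ (A₁^2+B^2)*(A₂^2+B^2) := by
    have k1 : a^2 ≤ A₁^2 := by nlinarith
    have k2 : a^2 ≤ A₂^2 := by nlinarith
    have k3 : a^2*a^2 ≤ A₁^2*A₂^2 := mul_le_mul k1 k2 (by positivity) (by nlinarith)
    nlinarith [k3, mul_nonneg (sq_nonneg A₁) (sq_nonneg B), mul_nonneg (sq_nonneg B) (sq_nonneg A₂),
      mul_nonneg (sq_nonneg B) (sq_nonneg B)]
  rw [_root_.abs_of_nonneg (by positivity : (0:ℝ) ≤ (A₁^2+B^2)*(A₂^2+B^2))]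
  have hN0 : 0 ≤ N := norm_nonneg _
  calc |A₁ - A₂| * N / ((A₁^2+B^2)*(A₂^2+B^2))
      ≤ |A₁ - A₂| * (B^2 + b^2 + 2 * |B| * b) / a^4 :=
        div_le_div₀ (mul_nonneg (abs_nonneg _) (by nlinarith [_root_.sq_abs B, sq_nonneg (|B|+b)]))
          (mul_le_mul_of_nonneg_left hnum (abs_nonneg _)) (by positivity) hden
    _ = (B^2 + b^2 + 2 * |B| * b)/a^4 * |A₁ - A₂| := by ring

lemma alg_final (y c k : ℝ) (hy : y ≠ 0) (hk : k ≠ 0) :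
    y^4 * ((c * y^2) / ((k * (y^3/8)) * (k * y^3))) = 8*c/k^2 := by
  field_simp

lemma complex_abs_sub_le (x y : ℂ) : ‖x - y‖ ≤ ‖x‖ + ‖y‖ := by
  rw [sub_eq_add_neg]
  refine le_trans (norm_add_le _ _) ?_
  rw [norm_neg]


section QseqLemmas

variable (αi αo βi βo R σ γi γo : ℝ)

lemma qseq_eq_Fc (n : ℤ) (hn : n ≠ 0) :
    qseq αi αo βi βo R σ γi γo n
      = Fc (Aseq αi αo R n) (βo - βi) ((n.sign : ℤ):ℝ)
          / ((Aseq αi αo R n^2 + (βo - βi)^2 : ℝ):ℂ) * ((museq σ γi γo n : ℝ):ℂ) := by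
  simp only [qseq, Fc]
  push_cast
  ring

lemma qseq_re (n : ℤ) (hn : n ≠ 0) (hd : Aseq αi αo R n^2 + (βo - βi)^2 ≠ 0) :
    (qseq αi αo βi βo R σ γi γo n).re
      = Aseq αi αo R n * museq σ γi γo n / (Aseq αi αo R n^2 + (βo - βi)^2) := by
  rw [qseq_eq_Fc αi αo βi βo R σ γi γo n hn, Fc_mul_re _ _ _ _ _ hd]

lemma sign_abs_one (n : ℤ) (hn : n ≠ 0) : |((n.sign : ℤ):ℝ)| = 1 := by
  rcases hn.lt_or_gt with h | h
  · rw [Int.sign_eq_neg_one_iff_neg.mpr h]; norm_num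
  · rw [Int.sign_eq_one_iff_pos.mpr h]; norm_num

variable (hαi : 0 < αi) (hαo : 0 < αo) (hR : 2 ≤ R) (hσ : 0 < σ)

include hαi hαo hR in
lemma qd_bounds (n : ℤ) (hn : n ≠ 0) :
    (αi+αo)^2 ≤ Aseq αi αo R n^2 + (βo - βi)^2 ∧
    Aseq αi αo R n^2 + (βo - βi)^2 ≤ (αi+4*αo)^2 + (βo - βi)^2 ∧
    0 < Aseq αi αo R n^2 + (βo - βi)^2 := by
  have h1 := (aseq_bounds αi αo R hαo hR n hn).1
  have h2 := aseq_ub αi αo R hαo hR n hn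
  refine ⟨by nlinarith [sq_nonneg (βo - βi)], by nlinarith, ?_⟩
  nlinarith [sq_nonneg (βo - βi)]

include hαi hαo hR in
lemma qcoef_abs (n : ℤ) (hn : n ≠ 0) :
    ‖Fc (Aseq αi αo R n) (βo - βi) ((n.sign : ℤ):ℝ)
        / ((Aseq αi αo R n^2 + (βo - βi)^2 : ℝ):ℂ)‖
      ≤ ((αi+4*αo) + |βo - βi|)/(αi+αo)^2 := by
  obtain ⟨hd1, hd2, hd3⟩ := qd_bounds αi αo βi βo R hαi hαo hR n hn
  have h1 := (aseq_bounds αi αo R hαo hR n hn).1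
  have h2 := aseq_ub αi αo R hαo hR n hn
  rw [norm_div, Complex.norm_real, Real.norm_eq_abs, _root_.abs_of_pos hd3]
  have h3 : ‖Fc (Aseq αi αo R n) (βo - βi) ((n.sign : ℤ):ℝ)‖
      ≤ Aseq αi αo R n + |βo - βi| :=
    Fc_abs_le _ _ _ (le_of_eq (sign_abs_one n hn)) (by linarith)
  exact div_le_div₀ (by nlinarith [abs_nonneg (βo - βi)]) (by linarith) (by positivity) hd1

include hαi hαo hR hσ in
lemma qre_ub (n : ℤ) (hn : n ≠ 0) :
    (qseq αi αo βi βo R σ γi γo n).re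
      ≤ ((αi+4*αo)/(αi+αo)^2)
          * (|σ - 2*(γo - γi)| * max 1 (|σ - 2*(γo - γi)|/σ)) := by
  obtain ⟨hd1, hd2, hd3⟩ := qd_bounds αi αo βi βo R hαi hαo hR n hn
  have hA1 := (aseq_bounds αi αo R hαo hR n hn).1
  have hA2 := aseq_ub αi αo R hαo hR n hn
  rw [qseq_re αi αo βi βo R σ γi γo n hn hd3.ne']
  have hμub := museq_ub σ γi γo hσ n
  have hM0 : 0 ≤ |σ - 2*(γo - γi)| * max 1 (|σ - 2*(γo - γi)|/σ) :=
    mul_nonneg (abs_nonneg _) (le_trans zero_le_one (le_max_left _ _))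
  rcases le_total 0 (museq σ γi γo n) with hμ0 | hμ0
  · have step1 : Aseq αi αo R n * museq σ γi γo n / (Aseq αi αo R n^2 + (βo - βi)^2)
        ≤ (αi+4*αo) * museq σ γi γo n / (αi+αo)^2 :=
      div_le_div₀ (by nlinarith) (by nlinarith) (by positivity) hd1
    have step2 : (αi+4*αo) * museq σ γi γo n / (αi+αo)^2
        = ((αi+4*αo)/(αi+αo)^2) * museq σ γi γo n := by ring
    have step3 : ((αi+4*αo)/(αi+αo)^2) * museq σ γi γo n
        ≤ ((αi+4*αo)/(αi+αo)^2)
          * (|σ - 2*(γo - γi)| * max 1 (|σ - 2*(γo - γi)|/σ)) := by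
      apply mul_le_mul_of_nonneg_left hμub
      positivity
    linarith
  · have h0 : Aseq αi αo R n * museq σ γi γo n ≤ 0 := by nlinarith
    have hcc : Aseq αi αo R n * museq σ γi γo n / (Aseq αi αo R n^2 + (βo - βi)^2) ≤ 0 :=
      div_nonpos_iff.mpr (Or.inr ⟨h0, hd3.le⟩)
    exact le_trans hcc (mul_nonneg (by positivity) hM0)

include hαi hαo hR hσ in
lemma qre_growth (n : ℤ) (hn : n ≠ 0)
    (hbig : max 1 (2*|σ - 2*(γo - γi)|/σ) ≤ |(n:ℝ)|) :
    (qseq αi αo βi βo R σ γi γo n).re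
      ≤ -((αi+αo)/((αi+4*αo)^2 + (βo - βi)^2) * (σ/2) * |(n:ℝ)|^3) := by
  obtain ⟨hd1, hd2, hd3⟩ := qd_bounds αi αo βi βo R hαi hαo hR n hn
  have hA1 := (aseq_bounds αi αo R hαo hR n hn).1
  have hA2 := aseq_ub αi αo R hαo hR n hn
  have hx0 : (0:ℝ) ≤ |(n:ℝ)| := abs_nonneg _
  have hμn : museq σ γi γo n ≤ -(σ/2) * |(n:ℝ)|^3 := museq_neg σ γi γo hσ n hbig
  have hμ0 : museq σ γi γo n ≤ 0 := le_trans hμn (by nlinarith [pow_nonneg hx0 3])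
  have hDpos : (0:ℝ) < (αi+4*αo)^2 + (βo - βi)^2 := by nlinarith [sq_nonneg (βo - βi)]
  rw [qseq_re αi αo βi βo R σ γi γo n hn hd3.ne']
  have step1 : Aseq αi αo R n * museq σ γi γo n ≤ (αi+αo) * museq σ γi γo n := by nlinarith
  have step2 : Aseq αi αo R n * museq σ γi γo n / (Aseq αi αo R n^2 + (βo - βi)^2)
      ≤ Aseq αi αo R n * museq σ γi γo n / ((αi+4*αo)^2 + (βo - βi)^2) := by
    rw [div_le_div_iff₀ hd3 hDpos]
    nlinarith [mul_nonpos_iff.mpr (Or.inr ⟨(by nlinarith : Aseq αi αo R n * museq σ γi γo n ≤ 0),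
      (by linarith : (0:ℝ) ≤ (αi+4*αo)^2 + (βo - βi)^2 - (Aseq αi αo R n^2 + (βo - βi)^2))⟩)]
  have step3 : Aseq αi αo R n * museq σ γi γo n / ((αi+4*αo)^2 + (βo - βi)^2)
      ≤ (αi+αo) * museq σ γi γo n / ((αi+4*αo)^2 + (βo - βi)^2) :=
    (div_le_div_iff_of_pos_right hDpos).mpr step1
  have step4 : (αi+αo) * museq σ γi γo n / ((αi+4*αo)^2 + (βo - βi)^2)
      = ((αi+αo)/((αi+4*αo)^2 + (βo - βi)^2)) * museq σ γi γo n := by ring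
  have step5 : ((αi+αo)/((αi+4*αo)^2 + (βo - βi)^2)) * museq σ γi γo n
      ≤ ((αi+αo)/((αi+4*αo)^2 + (βo - βi)^2)) * (-(σ/2) * |(n:ℝ)|^3) :=
    mul_le_mul_of_nonneg_left hμn (by positivity)
  have step6 : ((αi+αo)/((αi+4*αo)^2 + (βo - βi)^2)) * (-(σ/2) * |(n:ℝ)|^3)
      = -((αi+αo)/((αi+4*αo)^2 + (βo - βi)^2) * (σ/2) * |(n:ℝ)|^3) := by ring
  linarith

set_option maxHeartbeats 2000000 in
include hαi hαo hR hσ in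
lemma qdiff_bound (n : ℤ) (hcase : 2 ≤ n ∨ n ≤ -2) :
    ‖qseq αi αo βi βo R σ γi γo (n+1) - qseq αi αo βi βo R σ γi γo n‖
      ≤ (((αi+4*αo) + |βo - βi|)/(αi+αo)^2 * (|σ - 2*(γo - γi)| + 7*σ)
          + 15 * (((βo - βi)^2 + (αi+4*αo)^2 + 2 * |βo - βi| * (αi+4*αo))/(αi+αo)^4)
            * αo * (|σ - 2*(γo - γi)| + σ)) * (n:ℝ)^2 := by
  have hn : n ≠ 0 := by rcases hcase with h|h <;> omega
  have hn1 : n + 1 ≠ 0 := by rcases hcase with h|h <;> omega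
  have hsame : ((n+1).sign : ℤ) = n.sign := by
    rcases hcase with h|h
    · rw [Int.sign_eq_one_iff_pos.mpr (by omega : (0:ℤ) < n + 1),
        Int.sign_eq_one_iff_pos.mpr (by omega : (0:ℤ) < n)]
    · rw [Int.sign_eq_neg_one_iff_neg.mpr (by omega : n + 1 < 0),
        Int.sign_eq_neg_one_iff_neg.mpr (by omega : n < 0)]
  have hK10 : (0:ℝ) ≤ ((αi+4*αo) + |βo - βi|)/(αi+αo)^2 :=
    div_nonneg (by nlinarith [abs_nonneg (βo - βi)]) (by positivity)
  have hL0 : (0:ℝ) ≤ ((βo - βi)^2 + (αi+4*αo)^2 + 2 * |βo - βi| * (αi+4*αo))/(αi+αo)^4 :=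
    div_nonneg (by nlinarith [_root_.sq_abs (βo - βi), sq_nonneg (|βo - βi| + (αi+4*αo))])
      (by positivity)
  have hx1 : (1:ℝ) ≤ |(n:ℝ)| := abs_cast_ge_one n hn
  have hxx : |(n:ℝ)|^2 = (n:ℝ)^2 := _root_.sq_abs _
  have hc2 : (0:ℝ) < (n:ℝ)^2 := by nlinarith
  have hc3 : (1:ℝ) ≤ ((n:ℝ)+1)^2 := by
    have h := abs_cast_ge_one (n+1) hn1
    push_cast at h
    nlinarith [h, _root_.sq_abs ((n:ℝ)+1)]
  have hc3' : (0:ℝ) < ((n:ℝ)+1)^2 := by linarith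
  have hA1b := aseq_bounds αi αo R hαo hR (n+1) hn1
  have hA2b := aseq_bounds αi αo R hαo hR n hn
  push_cast at hA1b
  have h3nn : (0:ℝ) ≤ 3*αo/(n:ℝ)^2 := div_nonneg (by linarith) hc2.le
  have h3nn' : (0:ℝ) ≤ 3*αo/((n:ℝ)+1)^2 := div_nonneg (by linarith) hc3'.le
  have key1 : 3*αo/((n:ℝ)+1)^2 ≤ 12*αo/(n:ℝ)^2 := by
    rw [div_le_div_iff₀ hc3' hc2]
    rcases hcase with h|h
    · have h' : (2:ℝ) ≤ (n:ℝ) := by exact_mod_cast h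
      nlinarith
    · have h' : (n:ℝ) ≤ -2 := by exact_mod_cast h
      have hfac : (0:ℝ) ≤ 3*(n:ℝ)^2+8*(n:ℝ)+4 := by nlinarith [sq_nonneg ((n:ℝ)+2)]
      nlinarith [hfac, mul_nonneg hαo.le hfac]
  have hΔA : |Aseq αi αo R (n+1) - Aseq αi αo R n| ≤ 15*αo/(n:ℝ)^2 := by
    rw [abs_le]
    constructor
    · have h12 : (0:ℝ) ≤ 12*αo/(n:ℝ)^2 := div_nonneg (by linarith) hc2.le
      have heq : -(15*αo/(n:ℝ)^2) = -(3*αo/(n:ℝ)^2) - 12*αo/(n:ℝ)^2 := by ring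
      rw [heq]
      linarith [hA1b.1, hA2b.2]
    · have heq : 15*αo/(n:ℝ)^2 = 12*αo/(n:ℝ)^2 + 3*αo/(n:ℝ)^2 := by ring
      rw [heq]
      linarith [hA1b.2, hA2b.1, key1]
  rw [qseq_eq_Fc αi αo βi βo R σ γi γo (n+1) hn1, qseq_eq_Fc αi αo βi βo R σ γi γo n hn, hsame]
  have hdec : Fc (Aseq αi αo R (n+1)) (βo - βi) ((n.sign : ℤ):ℝ)
        / ((Aseq αi αo R (n+1)^2+(βo - βi)^2:ℝ):ℂ) * ((museq σ γi γo (n+1):ℝ):ℂ)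
        - Fc (Aseq αi αo R n) (βo - βi) ((n.sign : ℤ):ℝ)
          / ((Aseq αi αo R n^2+(βo - βi)^2:ℝ):ℂ) * ((museq σ γi γo n:ℝ):ℂ)
      = Fc (Aseq αi αo R (n+1)) (βo - βi) ((n.sign : ℤ):ℝ)
          / ((Aseq αi αo R (n+1)^2+(βo - βi)^2:ℝ):ℂ)
          * ((museq σ γi γo (n+1) - museq σ γi γo n : ℝ):ℂ)
        + (Fc (Aseq αi αo R (n+1)) (βo - βi) ((n.sign : ℤ):ℝ)
            / ((Aseq αi αo R (n+1)^2+(βo - βi)^2:ℝ):ℂ)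
          - Fc (Aseq αi αo R n) (βo - βi) ((n.sign : ℤ):ℝ)
            / ((Aseq αi αo R n^2+(βo - βi)^2:ℝ):ℂ)) * ((museq σ γi γo n:ℝ):ℂ) := by
    push_cast
    ring
  rw [hdec]
  have hcoef1 : ‖Fc (Aseq αi αo R (n+1)) (βo - βi) ((n.sign : ℤ):ℝ)
        / ((Aseq αi αo R (n+1)^2+(βo - βi)^2:ℝ):ℂ)‖ ≤ ((αi+4*αo) + |βo - βi|)/(αi+αo)^2 := by
    have h := qcoef_abs αi αo βi βo R hαi hαo hR (n+1) hn1
    rw [hsame] at h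
    exact h
  have hΔμ : |museq σ γi γo (n+1) - museq σ γi γo n| ≤ (|σ - 2*(γo - γi)| + 7*σ) * (n:ℝ)^2 :=
    museq_diff σ γi γo hσ n hcase
  have t1 : ‖Fc (Aseq αi αo R (n+1)) (βo - βi) ((n.sign : ℤ):ℝ)
        / ((Aseq αi αo R (n+1)^2+(βo - βi)^2:ℝ):ℂ)
        * ((museq σ γi γo (n+1) - museq σ γi γo n : ℝ):ℂ)‖
      ≤ (((αi+4*αo) + |βo - βi|)/(αi+αo)^2) * ((|σ - 2*(γo - γi)| + 7*σ) * (n:ℝ)^2) := by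
    rw [norm_mul, Complex.norm_real, Real.norm_eq_abs]
    exact mul_le_mul hcoef1 hΔμ (abs_nonneg _) hK10
  have hFdiff : ‖Fc (Aseq αi αo R (n+1)) (βo - βi) ((n.sign : ℤ):ℝ)
        / ((Aseq αi αo R (n+1)^2+(βo - βi)^2:ℝ):ℂ)
        - Fc (Aseq αi αo R n) (βo - βi) ((n.sign : ℤ):ℝ)
          / ((Aseq αi αo R n^2+(βo - βi)^2:ℝ):ℂ)‖
      ≤ (((βo - βi)^2 + (αi+4*αo)^2 + 2 * |βo - βi| * (αi+4*αo))/(αi+αo)^4)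
        * (15*αo/(n:ℝ)^2) := by
    have h := Fc_diff (Aseq αi αo R (n+1)) (Aseq αi αo R n) (βo - βi) ((n.sign : ℤ):ℝ)
      (αi+αo) (αi+4*αo) (le_of_eq (sign_abs_one n hn)) (by linarith)
      hA1b.1 (aseq_ub αi αo R hαo hR (n+1) hn1) hA2b.1 (aseq_ub αi αo R hαo hR n hn)
    calc ‖_‖
        ≤ ((βo - βi)^2 + (αi+4*αo)^2 + 2 * |βo - βi| * (αi+4*αo))/(αi+αo)^4
          * |Aseq αi αo R (n+1) - Aseq αi αo R n| := h
      _ ≤ _ := mul_le_mul_of_nonneg_left hΔA hL0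
  have habsμ : |museq σ γi γo n| ≤ (|σ - 2*(γo - γi)| + σ) * |(n:ℝ)|^3 :=
    museq_abs_le σ γi γo hσ n hn
  have t2 : ‖(Fc (Aseq αi αo R (n+1)) (βo - βi) ((n.sign : ℤ):ℝ)
        / ((Aseq αi αo R (n+1)^2+(βo - βi)^2:ℝ):ℂ)
        - Fc (Aseq αi αo R n) (βo - βi) ((n.sign : ℤ):ℝ)
          / ((Aseq αi αo R n^2+(βo - βi)^2:ℝ):ℂ)) * ((museq σ γi γo n:ℝ):ℂ)‖
      ≤ ((((βo - βi)^2 + (αi+4*αo)^2 + 2 * |βo - βi| * (αi+4*αo))/(αi+αo)^4)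
          * (15*αo/(n:ℝ)^2)) * ((|σ - 2*(γo - γi)| + σ) * |(n:ℝ)|^3) := by
    rw [norm_mul, Complex.norm_real, Real.norm_eq_abs]
    apply mul_le_mul hFdiff habsμ (abs_nonneg _)
    apply mul_nonneg hL0 (div_nonneg (by linarith) hc2.le)
  have hcomb : (((((βo - βi)^2 + (αi+4*αo)^2 + 2 * |βo - βi| * (αi+4*αo))/(αi+αo)^4))
          * (15*αo/(n:ℝ)^2)) * ((|σ - 2*(γo - γi)| + σ) * |(n:ℝ)|^3)
      = 15 * (((βo - βi)^2 + (αi+4*αo)^2 + 2 * |βo - βi| * (αi+4*αo))/(αi+αo)^4) * αo * (|σ - 2*(γo - γi)| + σ) * |(n:ℝ)| := by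
    have h3 : |(n:ℝ)|^3 = |(n:ℝ)| * (n:ℝ)^2 := by
      rw [pow_succ, _root_.sq_abs, mul_comm]
    rw [h3]
    field_simp
  have hxle : 15 * (((βo - βi)^2 + (αi+4*αo)^2 + 2 * |βo - βi| * (αi+4*αo))/(αi+αo)^4) * αo * (|σ - 2*(γo - γi)| + σ) * |(n:ℝ)|
      ≤ 15 * (((βo - βi)^2 + (αi+4*αo)^2 + 2 * |βo - βi| * (αi+4*αo))/(αi+αo)^4) * αo * (|σ - 2*(γo - γi)| + σ) * (n:ℝ)^2 := by
    apply mul_le_mul_of_nonneg_left (by nlinarith)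
    have : (0:ℝ) ≤ |σ - 2*(γo - γi)| + σ := by positivity
    positivity
  calc ‖_‖ ≤ _ + _ := norm_add_le _ _
    _ ≤ (((αi+4*αo) + |βo - βi|)/(αi+αo)^2) * ((|σ - 2*(γo - γi)| + σ*7) * (n:ℝ)^2)
        + (((((βo - βi)^2 + (αi+4*αo)^2 + 2 * |βo - βi| * (αi+4*αo))/(αi+αo)^4)) * (15*αo/(n:ℝ)^2)) * ((|σ - 2*(γo - γi)| + σ) * |(n:ℝ)|^3) := by
        refine add_le_add (le_trans t1 (le_of_eq (by ring))) t2
    _ ≤ (((αi+4*αo) + |βo - βi|)/(αi+αo)^2) * ((|σ - 2*(γo - γi)| + σ*7) * (n:ℝ)^2)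
        + 15 * (((βo - βi)^2 + (αi+4*αo)^2 + 2 * |βo - βi| * (αi+4*αo))/(αi+αo)^4) * αo * (|σ - 2*(γo - γi)| + σ) * (n:ℝ)^2 := by
        rw [hcomb]; exact add_le_add_right hxle _
    _ = (((αi+4*αo) + |βo - βi|)/(αi+αo)^2 * (|σ - 2*(γo - γi)| + 7*σ)
          + 15 * (((βo - βi)^2 + (αi+4*αo)^2 + 2 * |βo - βi| * (αi+4*αo))/(αi+αo)^4)
            * αo * (|σ - 2*(γo - γi)| + σ)) * (n:ℝ)^2 := by ring

end QseqLemmas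

set_option maxHeartbeats 2000000 in
/-- For `λ ∈ ℂ` with `Re λ > max(0, sup_{n ≠ 0} Re q_n)` and
`Q_n^λ := (λ − q_n)⁻¹` (with `q_0 := 0`), one has
`sup_{n ≠ 0} |n|⁴·|Q_{n+1}^λ − Q_n^λ| < ∞`. -/
theorem statement15 (αi αo βi βo R σ γi γo : ℝ)
    (hαi : 0 < αi) (hαo : 0 < αo) (hβi : 0 ≤ βi) (hβo : 0 ≤ βo) (hR : 2 ≤ R)
    (hσ : 0 < σ) (lam : ℂ)
    (hlam : max 0 (sSup {x : ℝ | ∃ n : ℤ, n ≠ 0 ∧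
        x = (qseq0 αi αo βi βo R σ γi γo n).re}) < lam.re) :
    ∃ C : ℝ, ∀ n : ℤ, n ≠ 0 →
      (|n| : ℝ) ^ 4 * ‖(lam - qseq0 αi αo βi βo R σ γi γo (n + 1))⁻¹
        - (lam - qseq0 αi αo βi βo R σ γi γo n)⁻¹‖ ≤ C := by
  classical
  have hq0eq : ∀ n : ℤ, n ≠ 0 → qseq0 αi αo βi βo R σ γi γo n = qseq αi αo βi βo R σ γi γo n := by
    intro n hn; simp [qseq0, hn]
  have hReUB : ∀ n : ℤ, n ≠ 0 → (qseq0 αi αo βi βo R σ γi γo n).re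
      ≤ ((αi+4*αo)/(αi+αo)^2) * (|σ - 2*(γo - γi)| * max 1 (|σ - 2*(γo - γi)|/σ)) := by
    intro n hn
    rw [hq0eq n hn]
    exact qre_ub αi αo βi βo R σ γi γo hαi hαo hR hσ n hn
  have hSbdd : BddAbove {x : ℝ | ∃ n : ℤ, n ≠ 0 ∧ x = (qseq0 αi αo βi βo R σ γi γo n).re} := by
    refine ⟨((αi+4*αo)/(αi+αo)^2) * (|σ - 2*(γo - γi)| * max 1 (|σ - 2*(γo - γi)|/σ)), ?_⟩
    rintro x ⟨n, hn, rfl⟩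
    exact hReUB n hn
  have hsupS : sSup {x : ℝ | ∃ n : ℤ, n ≠ 0 ∧ x = (qseq0 αi αo βi βo R σ γi γo n).re} < lam.re := lt_of_le_of_lt (le_max_right 0 _) hlam
  have hlam0 : 0 < lam.re := lt_of_le_of_lt (le_max_left 0 _) hlam
  obtain ⟨δ0, hδ0pos, hδ0low⟩ : ∃ δ0 : ℝ, 0 < δ0 ∧
      ∀ m : ℤ, δ0 ≤ ‖lam - qseq0 αi αo βi βo R σ γi γo m‖ := by
    refine ⟨min (lam.re - sSup {x : ℝ | ∃ n : ℤ, n ≠ 0 ∧ x = (qseq0 αi αo βi βo R σ γi γo n).re}) lam.re, lt_min (by linarith) hlam0, ?_⟩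
    intro m
    by_cases hm : m = 0
    · subst hm
      have hq0 : qseq0 αi αo βi βo R σ γi γo 0 = 0 := by simp [qseq0]
      rw [hq0, sub_zero]
      exact le_trans (min_le_right _ _) (Complex.re_le_norm lam)
    · have hmem : (qseq0 αi αo βi βo R σ γi γo m).re ∈ {x : ℝ | ∃ n : ℤ, n ≠ 0 ∧ x = (qseq0 αi αo βi βo R σ γi γo n).re} := ⟨m, hm, rfl⟩
      have hle := le_csSup hSbdd hmem
      calc min (lam.re - sSup {x : ℝ | ∃ n : ℤ, n ≠ 0 ∧ x = (qseq0 αi αo βi βo R σ γi γo n).re}) lam.re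
          ≤ lam.re - sSup {x : ℝ | ∃ n : ℤ, n ≠ 0 ∧ x = (qseq0 αi αo βi βo R σ γi γo n).re} := min_le_left _ _
        _ ≤ lam.re - (qseq0 αi αo βi βo R σ γi γo m).re := by linarith
        _ = (lam - qseq0 αi αo βi βo R σ γi γo m).re := by simp [Complex.sub_re]
        _ ≤ ‖lam - qseq0 αi αo βi βo R σ γi γo m‖ := Complex.re_le_norm _
  have hne : ∀ m : ℤ, lam - qseq0 αi αo βi βo R σ γi γo m ≠ 0 := by
    intro m h
    have h2 := hδ0low m
    rw [h, norm_zero] at h2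
    linarith
  set k3 := (αi+αo)/((αi+4*αo)^2 + (βo - βi)^2) * (σ/2) with hk3
  have hk30 : 0 < k3 := by
    rw [hk3]
    exact mul_pos (div_pos (by linarith) (by nlinarith [sq_nonneg (βo - βi)])) (by linarith)
  have hgrow : ∀ n : ℤ, n ≠ 0 → max 1 (2*|σ - 2*(γo - γi)|/σ) ≤ |(n:ℝ)| →
      k3 * |(n:ℝ)|^3 ≤ ‖lam - qseq0 αi αo βi βo R σ γi γo n‖ := by
    intro n hn hbig
    have h := qre_growth αi αo βi βo R σ γi γo hαi hαo hR hσ n hn hbig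
    rw [← hq0eq n hn] at h
    have h2 : k3 * |(n:ℝ)|^3 ≤ lam.re - (qseq0 αi αo βi βo R σ γi γo n).re := by
      rw [hk3]; nlinarith [h, hlam0]
    calc k3 * |(n:ℝ)|^3 ≤ lam.re - (qseq0 αi αo βi βo R σ γi γo n).re := h2
      _ = (lam - qseq0 αi αo βi βo R σ γi γo n).re := by simp [Complex.sub_re]
      _ ≤ ‖lam - qseq0 αi αo βi βo R σ γi γo n‖ := Complex.re_le_norm _
  set Cnum := ((αi+4*αo) + |βo - βi|)/(αi+αo)^2 * (|σ - 2*(γo - γi)| + 7*σ)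
      + 15 * (((βo - βi)^2 + (αi+4*αo)^2 + 2 * |βo - βi| * (αi+4*αo))/(αi+αo)^4)
        * αo * (|σ - 2*(γo - γi)| + σ) with hCnum
  have hCnum0 : 0 ≤ Cnum := by
    rw [hCnum]
    have h1 : (0:ℝ) ≤ ((αi+4*αo) + |βo - βi|)/(αi+αo)^2 :=
      div_nonneg (by nlinarith [abs_nonneg (βo - βi)]) (by positivity)
    have h2 : (0:ℝ) ≤ ((βo - βi)^2 + (αi+4*αo)^2 + 2 * |βo - βi| * (αi+4*αo))/(αi+αo)^4 :=
      div_nonneg (by nlinarith [_root_.sq_abs (βo - βi), sq_nonneg (|βo - βi| + (αi+4*αo))])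
        (by positivity)
    have h3 : (0:ℝ) ≤ |σ - 2*(γo - γi)| + 7*σ := add_nonneg (abs_nonneg _) (by linarith)
    have h4 : (0:ℝ) ≤ |σ - 2*(γo - γi)| + σ := add_nonneg (abs_nonneg _) (by linarith)
    nlinarith [mul_nonneg h1 h3,
      mul_nonneg (mul_nonneg (mul_nonneg (by norm_num : (0:ℝ) ≤ 15) h2) hαo.le) h4]
  have hnum : ∀ n : ℤ, (2 ≤ n ∨ n ≤ -2) →
      ‖qseq0 αi αo βi βo R σ γi γo (n+1) - qseq0 αi αo βi βo R σ γi γo n‖ ≤ Cnum * (n:ℝ)^2 := by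
    intro n hcase
    have hn : n ≠ 0 := by rcases hcase with h|h <;> omega
    have hn1 : n + 1 ≠ 0 := by rcases hcase with h|h <;> omega
    rw [hq0eq (n+1) hn1, hq0eq n hn, hCnum]
    exact qdiff_bound αi αo βi βo R σ γi γo hαi hαo hR hσ n hcase
  refine ⟨max ((max 2 (max 1 (2*|σ - 2*(γo - γi)|/σ) + 1))^4 * (δ0⁻¹ + δ0⁻¹)) (8*Cnum/k3^2), ?_⟩
  intro n hn
  have hNN2 : (2:ℝ) ≤ max 2 (max 1 (2*|σ - 2*(γo - γi)|/σ) + 1) := le_max_left _ _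
  rcases le_total |(n:ℝ)| (max 2 (max 1 (2*|σ - 2*(γo - γi)|/σ) + 1)) with hsmall | hbig
  · have h1 : ‖(lam - qseq0 αi αo βi βo R σ γi γo (n+1))⁻¹ - (lam - qseq0 αi αo βi βo R σ γi γo n)⁻¹‖ ≤ δ0⁻¹ + δ0⁻¹ := by
      refine le_trans (complex_abs_sub_le _ _) ?_
      rw [norm_inv, norm_inv]
      have i1 : (‖lam - qseq0 αi αo βi βo R σ γi γo (n+1)‖)⁻¹ ≤ δ0⁻¹ :=
        inv_anti₀ hδ0pos (hδ0low (n+1))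
      have i2 : (‖lam - qseq0 αi αo βi βo R σ γi γo n‖)⁻¹ ≤ δ0⁻¹ :=
        inv_anti₀ hδ0pos (hδ0low n)
      linarith
    have h2 : |(n:ℝ)|^4 ≤ (max 2 (max 1 (2*|σ - 2*(γo - γi)|/σ) + 1))^4 :=
      pow_le_pow_left₀ (abs_nonneg _) hsmall 4
    refine le_trans ?_ (le_max_left _ _)
    apply mul_le_mul h2 h1 (norm_nonneg _)
    positivity
  · have hx2 : (2:ℝ) ≤ |(n:ℝ)| := le_trans hNN2 hbig
    have hx0 : (0:ℝ) < |(n:ℝ)| := by linarith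
    have hcase : 2 ≤ n ∨ n ≤ -2 := by
      have h2' : ((2:ℤ):ℝ) ≤ ((|n|:ℤ):ℝ) := by rw [Int.cast_abs]; exact_mod_cast hx2
      have h2'' : (2:ℤ) ≤ |n| := by exact_mod_cast h2'
      rcases abs_cases n with ⟨he, _⟩ | ⟨he, _⟩ <;> omega
    have hn1 : n + 1 ≠ 0 := by rcases hcase with h|h <;> omega
    have hxp : |(n:ℝ)| - 1 ≤ |(n:ℝ)+1| := by
      have h := abs_sub_abs_le_abs_sub ((n:ℝ)) ((n:ℝ)+1)
      have h2 : |(n:ℝ) - ((n:ℝ)+1)| = 1 := by norm_num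
      linarith [h, h2.le]
    have hNrNN : max 1 (2*|σ - 2*(γo - γi)|/σ) + 1
        ≤ max 2 (max 1 (2*|σ - 2*(γo - γi)|/σ) + 1) := le_max_right _ _
    have hNr_n : max 1 (2*|σ - 2*(γo - γi)|/σ) ≤ |(n:ℝ)| := by linarith
    have hNr_n1 : max 1 (2*|σ - 2*(γo - γi)|/σ) ≤ |(n:ℝ)+1| := by linarith
    have hg1 := hgrow n hn hNr_n
    have hg2 : k3 * |(n:ℝ)+1|^3 ≤ ‖lam - qseq0 αi αo βi βo R σ γi γo (n+1)‖ := by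
      have h := hgrow (n+1) hn1 (by push_cast; exact hNr_n1)
      push_cast at h
      exact h
    have hhalf : |(n:ℝ)|/2 ≤ |(n:ℝ)+1| := by linarith
    have hcube : k3 * (|(n:ℝ)|^3/8) ≤ k3 * |(n:ℝ)+1|^3 := by
      apply mul_le_mul_of_nonneg_left _ hk30.le
      calc |(n:ℝ)|^3/8 = (|(n:ℝ)|/2)^3 := by ring
        _ ≤ |(n:ℝ)+1|^3 := pow_le_pow_left₀ (by positivity) hhalf 3
    have hq1 := hnum n hcase
    have hid : (lam - qseq0 αi αo βi βo R σ γi γo (n+1))⁻¹ - (lam - qseq0 αi αo βi βo R σ γi γo n)⁻¹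
        = (qseq0 αi αo βi βo R σ γi γo (n+1) - qseq0 αi αo βi βo R σ γi γo n) / ((lam - qseq0 αi αo βi βo R σ γi γo (n+1)) * (lam - qseq0 αi αo βi βo R σ γi γo n)) := by
      rw [inv_sub_inv (hne (n+1)) (hne n),
        show (lam - qseq0 αi αo βi βo R σ γi γo n) - (lam - qseq0 αi αo βi βo R σ γi γo (n+1)) = qseq0 αi αo βi βo R σ γi γo (n+1) - qseq0 αi αo βi βo R σ γi γo n by ring]
    rw [hid, norm_div, norm_mul]
    have hd0 : (0:ℝ) < (k3 * (|(n:ℝ)|^3/8)) * (k3 * |(n:ℝ)|^3) := by positivity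
    have hprod : (k3 * (|(n:ℝ)|^3/8)) * (k3 * |(n:ℝ)|^3)
        ≤ ‖lam - qseq0 αi αo βi βo R σ γi γo (n+1)‖ * ‖lam - qseq0 αi αo βi βo R σ γi γo n‖ :=
      mul_le_mul (le_trans hcube hg2) hg1 (by positivity) (norm_nonneg _)
    have step : ‖qseq0 αi αo βi βo R σ γi γo (n+1) - qseq0 αi αo βi βo R σ γi γo n‖
          / (‖lam - qseq0 αi αo βi βo R σ γi γo (n+1)‖ * ‖lam - qseq0 αi αo βi βo R σ γi γo n‖)
        ≤ (Cnum * (n:ℝ)^2) / ((k3 * (|(n:ℝ)|^3/8)) * (k3 * |(n:ℝ)|^3)) :=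
      div_le_div₀ (mul_nonneg hCnum0 (sq_nonneg _)) hq1 hd0 hprod
    have hfin : |(n:ℝ)|^4 * ((Cnum * (n:ℝ)^2) / ((k3 * (|(n:ℝ)|^3/8)) * (k3 * |(n:ℝ)|^3)))
        = 8*Cnum/k3^2 := by
      rw [← _root_.sq_abs ((n:ℝ))]
      exact alg_final |(n:ℝ)| Cnum k3 hx0.ne' hk30.ne'
    refine le_trans ?_ (le_max_right _ _)
    rw [← hfin]
    exact mul_le_mul_of_nonneg_left step (by positivity)
end
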